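/- arXiv:2401.11774 — 6 statements merged into one kernel-verified Lean document; each statement's English description precedes it below -/
import Mathlib

section
/- Assume the sign conditions hold and that the pair (A, B) is stabilizable. Then for every symmetric X̃ ∈ ℝ^{n×n} with X̃ ⪰ 0, the pair (A_c(X̃), G_c(X̃)) is stabilizable; that is, for every λ ∈ ℂ with Re λ ≥ 0 and every y ∈ ℂⁿ satisfying yᴴ(A_c(X̃) − λIₙ) = 0 and yᴴ G_c(X̃) = 0, one has y = 0. -/
open Matrix Filter

noncomputable section

/-- `Π₁₁(X) = Σᵢ (A₀ⁱ)ᵀ X A₀ⁱ`. -/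
def Pi11 {n r : ℕ} (A0 : Fin r → Matrix (Fin n) (Fin n) ℝ)
    (X : Matrix (Fin n) (Fin n) ℝ) : Matrix (Fin n) (Fin n) ℝ :=
  ∑ i, (A0 i)ᵀ * X * A0 i

/-- `Π₁₂(X) = Σᵢ (A₀ⁱ)ᵀ X B₀ⁱ`. -/
def Pi12 {n m r : ℕ} (A0 : Fin r → Matrix (Fin n) (Fin n) ℝ)
    (B0 : Fin r → Matrix (Fin n) (Fin m) ℝ)
    (X : Matrix (Fin n) (Fin n) ℝ) : Matrix (Fin n) (Fin m) ℝ :=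
  ∑ i, (A0 i)ᵀ * X * B0 i

/-- `Π₂₂(X) = Σᵢ (B₀ⁱ)ᵀ X B₀ⁱ`. -/
def Pi22 {n m r : ℕ} (B0 : Fin r → Matrix (Fin n) (Fin m) ℝ)
    (X : Matrix (Fin n) (Fin n) ℝ) : Matrix (Fin m) (Fin m) ℝ :=
  ∑ i, (B0 i)ᵀ * X * B0 i

/-- The block matrix `Π(X) = [Π₁₁(X), Π₁₂(X); Π₁₂(X)ᵀ, Π₂₂(X)]`. -/
def PiBlock {n m r : ℕ} (A0 : Fin r → Matrix (Fin n) (Fin n) ℝ)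
    (B0 : Fin r → Matrix (Fin n) (Fin m) ℝ)
    (X : Matrix (Fin n) (Fin n) ℝ) : Matrix (Fin n ⊕ Fin m) (Fin n ⊕ Fin m) ℝ :=
  fromBlocks (Pi11 A0 X) (Pi12 A0 B0 X) (Pi12 A0 B0 X)ᵀ (Pi22 B0 X)

/-- `L_c(X) = L + Π₁₂(X)`. -/
def Lc {n m r : ℕ} (L : Matrix (Fin n) (Fin m) ℝ)
    (A0 : Fin r → Matrix (Fin n) (Fin n) ℝ) (B0 : Fin r → Matrix (Fin n) (Fin m) ℝ)
    (X : Matrix (Fin n) (Fin n) ℝ) : Matrix (Fin n) (Fin m) ℝ :=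
  L + Pi12 A0 B0 X

/-- `R_c(X) = R + Π₂₂(X)`. -/
def Rc {n m r : ℕ} (R : Matrix (Fin m) (Fin m) ℝ)
    (B0 : Fin r → Matrix (Fin n) (Fin m) ℝ)
    (X : Matrix (Fin n) (Fin n) ℝ) : Matrix (Fin m) (Fin m) ℝ :=
  R + Pi22 B0 X

/-- `Q_c(X) = Q + Π₁₁(X)`. -/
def Qc {n r : ℕ} (Q : Matrix (Fin n) (Fin n) ℝ)
    (A0 : Fin r → Matrix (Fin n) (Fin n) ℝ)
    (X : Matrix (Fin n) (Fin n) ℝ) : Matrix (Fin n) (Fin n) ℝ :=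
  Q + Pi11 A0 X

/-- `A_c(X) = A − B R_c(X)⁻¹ L_c(X)ᵀ`. -/
def Ac {n m r : ℕ} (A : Matrix (Fin n) (Fin n) ℝ) (B : Matrix (Fin n) (Fin m) ℝ)
    (L : Matrix (Fin n) (Fin m) ℝ) (R : Matrix (Fin m) (Fin m) ℝ)
    (A0 : Fin r → Matrix (Fin n) (Fin n) ℝ) (B0 : Fin r → Matrix (Fin n) (Fin m) ℝ)
    (X : Matrix (Fin n) (Fin n) ℝ) : Matrix (Fin n) (Fin n) ℝ :=
  A - B * (Rc R B0 X)⁻¹ * (Lc L A0 B0 X)ᵀ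

/-- `G_c(X) = B R_c(X)⁻¹ Bᵀ`. -/
def Gc {n m r : ℕ} (B : Matrix (Fin n) (Fin m) ℝ) (R : Matrix (Fin m) (Fin m) ℝ)
    (B0 : Fin r → Matrix (Fin n) (Fin m) ℝ)
    (X : Matrix (Fin n) (Fin n) ℝ) : Matrix (Fin n) (Fin n) ℝ :=
  B * (Rc R B0 X)⁻¹ * Bᵀ

/-- `H_c(X) = Q_c(X) − L_c(X) R_c(X)⁻¹ L_c(X)ᵀ`. -/
def Hc {n m r : ℕ} (Q : Matrix (Fin n) (Fin n) ℝ) (L : Matrix (Fin n) (Fin m) ℝ)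
    (R : Matrix (Fin m) (Fin m) ℝ)
    (A0 : Fin r → Matrix (Fin n) (Fin n) ℝ) (B0 : Fin r → Matrix (Fin n) (Fin m) ℝ)
    (X : Matrix (Fin n) (Fin n) ℝ) : Matrix (Fin n) (Fin n) ℝ :=
  Qc Q A0 X - Lc L A0 B0 X * (Rc R B0 X)⁻¹ * (Lc L A0 B0 X)ᵀ

/-- The SCARE residual
`𝓡(X) = AᵀX + XA + Q_c(X) − (XB + L_c(X)) R_c(X)⁻¹ (XB + L_c(X))ᵀ`. -/
def scareRes {n m r : ℕ} (A : Matrix (Fin n) (Fin n) ℝ) (B : Matrix (Fin n) (Fin m) ℝ)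
    (Q : Matrix (Fin n) (Fin n) ℝ) (L : Matrix (Fin n) (Fin m) ℝ)
    (R : Matrix (Fin m) (Fin m) ℝ)
    (A0 : Fin r → Matrix (Fin n) (Fin n) ℝ) (B0 : Fin r → Matrix (Fin n) (Fin m) ℝ)
    (X : Matrix (Fin n) (Fin n) ℝ) : Matrix (Fin n) (Fin n) ℝ :=
  Aᵀ * X + X * A + Qc Q A0 X -
    (X * B + Lc L A0 B0 X) * (Rc R B0 X)⁻¹ * (X * B + Lc L A0 B0 X)ᵀ

/-- `Ω(X) = [−G_c(X), −A_c(X); −A_c(X)ᵀ, H_c(X)]`. -/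
def Omega {n m r : ℕ} (A : Matrix (Fin n) (Fin n) ℝ) (B : Matrix (Fin n) (Fin m) ℝ)
    (Q : Matrix (Fin n) (Fin n) ℝ) (L : Matrix (Fin n) (Fin m) ℝ)
    (R : Matrix (Fin m) (Fin m) ℝ)
    (A0 : Fin r → Matrix (Fin n) (Fin n) ℝ) (B0 : Fin r → Matrix (Fin n) (Fin m) ℝ)
    (X : Matrix (Fin n) (Fin n) ℝ) : Matrix (Fin n ⊕ Fin n) (Fin n ⊕ Fin n) ℝ :=
  fromBlocks (-(Gc B R B0 X)) (-(Ac A B L R A0 B0 X)) (-(Ac A B L R A0 B0 X))ᵀ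
    (Hc Q L R A0 B0 X)

/-- The `2n×n` matrix `[X; −Iₙ]` stacking `X` over `−Iₙ`. -/
def stackNegI {n : ℕ} (X : Matrix (Fin n) (Fin n) ℝ) :
    Matrix (Fin n ⊕ Fin n) (Fin n) ℝ :=
  fromRows X (-1)

/-- The pair `(A, B)` is stabilizable: `yᴴ(A − λI) = 0`, `yᴴB = 0`, `Re λ ≥ 0` imply `y = 0`. -/
def Stabilizable {n m : ℕ} (A : Matrix (Fin n) (Fin n) ℝ)
    (B : Matrix (Fin n) (Fin m) ℝ) : Prop :=
  ∀ (lam : ℂ) (y : Fin n → ℂ), 0 ≤ lam.re →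
    vecMul (star y) (A.map Complex.ofReal - lam • 1) = 0 →
    vecMul (star y) (B.map Complex.ofReal) = 0 → y = 0

/-- The pair `(C, A)` is detectable: `(A − λI)z = 0`, `Cz = 0`, `Re λ ≥ 0` imply `z = 0`. -/
def Detectable {p n : ℕ} (C : Matrix (Fin p) (Fin n) ℝ)
    (A : Matrix (Fin n) (Fin n) ℝ) : Prop :=
  ∀ (lam : ℂ) (z : Fin n → ℂ), 0 ≤ lam.re →
    mulVec (A.map Complex.ofReal - lam • 1) z = 0 →
    mulVec (C.map Complex.ofReal) z = 0 → z = 0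

/-- A real square matrix is stable if all its (complex) eigenvalues have negative real part. -/
def IsStableMatrix {n : ℕ} (M : Matrix (Fin n) (Fin n) ℝ) : Prop :=
  ∀ μ ∈ spectrum ℂ (M.map Complex.ofReal), μ.re < 0

/-- Kernel condition: `(Q − LR⁻¹Lᵀ)z = 0` implies `Lᵀz = 0` and `A₀ⁱ z = 0` for all `i`. -/
def KernelCondition {n m r : ℕ} (Q : Matrix (Fin n) (Fin n) ℝ)
    (L : Matrix (Fin n) (Fin m) ℝ) (R : Matrix (Fin m) (Fin m) ℝ)
    (A0 : Fin r → Matrix (Fin n) (Fin n) ℝ) : Prop :=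
  ∀ z : Fin n → ℂ,
    mulVec ((Q - L * R⁻¹ * Lᵀ).map Complex.ofReal) z = 0 →
    mulVec (Lᵀ.map Complex.ofReal) z = 0 ∧
      ∀ i, mulVec ((A0 i).map Complex.ofReal) z = 0

/-- `Γ(X) = [[0, −A, −B], [−Aᵀ, Q_c(X), L_c(X)], [−Bᵀ, L_c(X)ᵀ, R_c(X)]]`. -/
def Gamma {n m r : ℕ} (A : Matrix (Fin n) (Fin n) ℝ) (B : Matrix (Fin n) (Fin m) ℝ)
    (Q : Matrix (Fin n) (Fin n) ℝ) (L : Matrix (Fin n) (Fin m) ℝ)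
    (R : Matrix (Fin m) (Fin m) ℝ)
    (A0 : Fin r → Matrix (Fin n) (Fin n) ℝ) (B0 : Fin r → Matrix (Fin n) (Fin m) ℝ)
    (X : Matrix (Fin n) (Fin n) ℝ) :
    Matrix ((Fin n ⊕ Fin n) ⊕ Fin m) ((Fin n ⊕ Fin n) ⊕ Fin m) ℝ :=
  fromBlocks (fromBlocks 0 (-A) (-Aᵀ) (Qc Q A0 X))
    (fromRows (-B) (Lc L A0 B0 X))
    (fromRows (-B) (Lc L A0 B0 X))ᵀ
    (Rc R B0 X)

/-- `F_W(Y) = [Y; −Iₙ]ᵀ (Ω(Y) − Ω(W)) [Y; −Iₙ]`. -/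
def FW {n m r : ℕ} (A : Matrix (Fin n) (Fin n) ℝ) (B : Matrix (Fin n) (Fin m) ℝ)
    (Q : Matrix (Fin n) (Fin n) ℝ) (L : Matrix (Fin n) (Fin m) ℝ)
    (R : Matrix (Fin m) (Fin m) ℝ)
    (A0 : Fin r → Matrix (Fin n) (Fin n) ℝ) (B0 : Fin r → Matrix (Fin n) (Fin m) ℝ)
    (W Y : Matrix (Fin n) (Fin n) ℝ) : Matrix (Fin n) (Fin n) ℝ :=
  (stackNegI Y)ᵀ * (Omega A B Q L R A0 B0 Y - Omega A B Q L R A0 B0 W) * stackNegI Y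

/-- `𝓕_W(Z) = Kᵀ Π(Z) K` with `K = [−Iₙ; R_c(W)⁻¹ (L_c(W) + W B)ᵀ]`. -/
def Fcal {n m r : ℕ} (B : Matrix (Fin n) (Fin m) ℝ)
    (L : Matrix (Fin n) (Fin m) ℝ) (R : Matrix (Fin m) (Fin m) ℝ)
    (A0 : Fin r → Matrix (Fin n) (Fin n) ℝ) (B0 : Fin r → Matrix (Fin n) (Fin m) ℝ)
    (W Z : Matrix (Fin n) (Fin n) ℝ) : Matrix (Fin n) (Fin n) ℝ :=
  (fromRows (-1 : Matrix (Fin n) (Fin n) ℝ)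
      ((Rc R B0 W)⁻¹ * (Lc L A0 B0 W + W * B)ᵀ))ᵀ *
    PiBlock A0 B0 Z *
    fromRows (-1 : Matrix (Fin n) (Fin n) ℝ)
      ((Rc R B0 W)⁻¹ * (Lc L A0 B0 W + W * B)ᵀ)

section Aux

private lemma realCT {a b : Type*} (M : Matrix a b ℝ) : Mᴴ = Mᵀ := by
  ext i j; simp [Matrix.conjTranspose_apply]

private lemma mapC_mul {a b c : Type*} [Fintype b] (M : Matrix a b ℝ) (N : Matrix b c ℝ) :
    (M * N).map Complex.ofReal = M.map Complex.ofReal * N.map Complex.ofReal := by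
  ext i j; simp [Matrix.mul_apply, Matrix.map_apply]

private lemma mapC_sub {a b : Type*} (M N : Matrix a b ℝ) :
    (M - N).map Complex.ofReal = M.map Complex.ofReal - N.map Complex.ofReal := by
  ext i j; simp [Matrix.map_apply]

private lemma mapC_CT {a b : Type*} (M : Matrix a b ℝ) :
    (M.map Complex.ofReal)ᴴ = Mᵀ.map Complex.ofReal := by
  ext i j; simp [Matrix.conjTranspose_apply, Matrix.map_apply]

open scoped ComplexOrder in
private lemma psd_mapC {k : ℕ} {M : Matrix (Fin k) (Fin k) ℝ} (h : M.PosSemidef) :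
    (M.map Complex.ofReal).PosSemidef := by
  obtain ⟨C, hC⟩ : ∃ C : Matrix (Fin k) (Fin k) ℝ, M = Cᴴ * C := by
    open scoped MatrixOrder in
    exact CStarAlgebra.nonneg_iff_eq_star_mul_self.mp h.nonneg
  have h2 : M.map Complex.ofReal = (C.map Complex.ofReal)ᴴ * (C.map Complex.ofReal) := by
    rw [hC, mapC_mul, mapC_CT, realCT]
  rw [h2]
  exact Matrix.posSemidef_conjTranspose_mul_self _

private lemma quad_zero {k : ℕ} {M : Matrix (Fin k) (Fin k) ℝ} (h : M.PosSemidef)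
    (x : Fin k → ℂ) (hx : star x ⬝ᵥ (M.map Complex.ofReal) *ᵥ x = 0) :
    (M.map Complex.ofReal) *ᵥ x = 0 :=
  ((psd_mapC h).dotProduct_mulVec_zero_iff x).mp hx

private lemma mapC_one {k : ℕ} : ((1 : Matrix (Fin k) (Fin k) ℝ).map Complex.ofReal) = 1 := by
  ext i j; by_cases hij : i = j <;> simp [Matrix.map_apply, Matrix.one_apply, hij]

end Aux

/-- If the sign conditions hold and (A,B) is stabilizable, then for every symmetric
PSD X̃ the pair (A_c(X̃), G_c(X̃)) is stabilizable. -/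
theorem stmt0 (n m r : ℕ) (hn : 0 < n) (hm : 0 < m) (hr : 0 < r)
    (A Q : Matrix (Fin n) (Fin n) ℝ) (B L : Matrix (Fin n) (Fin m) ℝ)
    (R : Matrix (Fin m) (Fin m) ℝ)
    (A0 : Fin r → Matrix (Fin n) (Fin n) ℝ) (B0 : Fin r → Matrix (Fin n) (Fin m) ℝ)
    (hQ : Q.IsHermitian) (hRsymm : R.IsHermitian)
    (hRpd : R.PosDef) (hsign : (fromBlocks Q L Lᵀ R).PosSemidef)
    (hstab : Stabilizable A B) :
    ∀ Xt : Matrix (Fin n) (Fin n) ℝ, Xt.IsHermitian → Xt.PosSemidef →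
      Stabilizable (Ac A B L R A0 B0 Xt) (Gc B R B0 Xt) := by
  intro Xt _ hXt
  -- R_c is positive definite
  have hPi22 : (Pi22 B0 Xt).PosSemidef := by
    unfold Pi22
    refine Finset.sum_induction _ _ (fun a b ha hb => ha.add hb) .zero (fun i _ => ?_)
    have h1 := hXt.conjTranspose_mul_mul_same (B0 i)
    rwa [realCT] at h1
  have hRc : (Rc R B0 Xt).PosDef := hRpd.add_posSemidef hPi22
  have hP : ((Rc R B0 Xt)⁻¹).PosDef := hRc.inv
  set P := (Rc R B0 Xt)⁻¹ with hPdef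
  intro lam y hre hA hG
  -- the complex matrices
  set Bc := B.map Complex.ofReal with hBc
  set Pc := P.map Complex.ofReal with hPc
  have hGc_psd : (Gc B R B0 Xt).PosSemidef := by
    have h1 := hP.posSemidef.mul_mul_conjTranspose_same B
    rwa [realCT] at h1
  have hGmap : (Gc B R B0 Xt).map Complex.ofReal = Bc * Pc * (Bᵀ.map Complex.ofReal) := by
    rw [show Gc B R B0 Xt = B * P * Bᵀ from rfl, mapC_mul, mapC_mul]
  -- quadratic form vanishes
  have h0 : star y ⬝ᵥ ((Gc B R B0 Xt).map Complex.ofReal) *ᵥ y = 0 := by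
    rw [Matrix.dotProduct_mulVec, hG, zero_dotProduct]
  set w := (Bᵀ.map Complex.ofReal) *ᵥ y with hw
  have hsw : star w = (star y) ᵥ* Bc := by
    rw [hw, Matrix.star_mulVec, mapC_CT, Matrix.transpose_transpose]
  have hquad : star w ⬝ᵥ Pc *ᵥ w = 0 := by
    have e : (Gc B R B0 Xt).map Complex.ofReal *ᵥ y = Bc *ᵥ (Pc *ᵥ w) := by
      rw [hGmap, ← Matrix.mulVec_mulVec, ← Matrix.mulVec_mulVec]
    calc star w ⬝ᵥ Pc *ᵥ w = (star y ᵥ* Bc) ⬝ᵥ (Pc *ᵥ w) := by rw [hsw]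
      _ = star y ⬝ᵥ Bc *ᵥ (Pc *ᵥ w) := (Matrix.dotProduct_mulVec _ _ _).symm
      _ = 0 := by rw [← e]; exact h0
  have hPcw : Pc *ᵥ w = 0 := quad_zero hP.posSemidef w hquad
  have hw0 : w = 0 := by
    have hinv : (P⁻¹).map Complex.ofReal * Pc = 1 := by
      rw [hPc, ← mapC_mul, Matrix.nonsing_inv_mul P hP.det_pos.ne'.isUnit, mapC_one]
    calc w = ((P⁻¹).map Complex.ofReal * Pc) *ᵥ w := by rw [hinv, Matrix.one_mulVec]
      _ = (P⁻¹).map Complex.ofReal *ᵥ (Pc *ᵥ w) := (Matrix.mulVec_mulVec _ _ _).symm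
      _ = 0 := by rw [hPcw, Matrix.mulVec_zero]
  have hyB : (star y) ᵥ* Bc = 0 := by rw [← hsw, hw0, star_zero]
  -- reduce A_c to A
  have hAc : (star y) ᵥ* ((Ac A B L R A0 B0 Xt).map Complex.ofReal)
      = (star y) ᵥ* (A.map Complex.ofReal) := by
    rw [show Ac A B L R A0 B0 Xt = A - B * (P * (Lc L A0 B0 Xt)ᵀ) from by
      rw [show Ac A B L R A0 B0 Xt = A - B * P * (Lc L A0 B0 Xt)ᵀ from rfl, Matrix.mul_assoc]]
    rw [mapC_sub, Matrix.vecMul_sub, mapC_mul, ← Matrix.vecMul_vecMul, ← hBc, hyB,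
      Matrix.zero_vecMul, sub_zero]
  have hA' : (star y) ᵥ* (A.map Complex.ofReal - lam • 1) = 0 := by
    rw [Matrix.vecMul_sub] at hA ⊢
    rw [hAc] at hA
    exact hA
  exact hstab lam y hre hA' hyB
end
end

section
/- Assume R ≻ 0. Then for every symmetric X̃ ∈ ℝ^{n×n} with X̃ ⪰ 0, one has L R⁻¹ Lᵀ + Π₁₁(X̃) − L_c(X̃) R_c(X̃)⁻¹ L_c(X̃)ᵀ ⪰ 0. -/
open Matrix Filter

noncomputable section

lemma psd_sum {k ι : Type*} [Fintype k] (s : Finset ι) (f : ι → Matrix k k ℝ)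
    (h : ∀ i ∈ s, (f i).PosSemidef) : (∑ i ∈ s, f i).PosSemidef := by
  classical
  induction s using Finset.induction_on with
  | empty => simpa using Matrix.PosSemidef.zero
  | insert _ _ hx ih =>
    rw [Finset.sum_insert hx]
    exact (h _ (Finset.mem_insert_self _ _)).add (ih fun i hi => h i (Finset.mem_insert_of_mem hi))

/-- If R ≻ 0 then for every symmetric PSD X̃ one has
LR⁻¹Lᵀ + Π₁₁(X̃) − L_c(X̃) R_c(X̃)⁻¹ L_c(X̃)ᵀ ⪰ 0. -/
theorem stmt2 (n m r : ℕ) (hn : 0 < n) (hm : 0 < m) (hr : 0 < r)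
    (A Q : Matrix (Fin n) (Fin n) ℝ) (B L : Matrix (Fin n) (Fin m) ℝ)
    (R : Matrix (Fin m) (Fin m) ℝ)
    (A0 : Fin r → Matrix (Fin n) (Fin n) ℝ) (B0 : Fin r → Matrix (Fin n) (Fin m) ℝ)
    (hQ : Q.IsHermitian) (hRsymm : R.IsHermitian)
    (hRpd : R.PosDef) :
    ∀ Xt : Matrix (Fin n) (Fin n) ℝ, Xt.IsHermitian → Xt.PosSemidef →
      (L * R⁻¹ * Lᵀ + Pi11 A0 Xt -
        Lc L A0 B0 Xt * (Rc R B0 Xt)⁻¹ * (Lc L A0 B0 Xt)ᵀ).PosSemidef := by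
  intro Xt hXt hXpsd
  simp only [Lc, Rc, Pi11, Pi12, Pi22]
  set P11 := ∑ i, (A0 i)ᵀ * Xt * A0 i with hP11
  set P12 := ∑ i, (A0 i)ᵀ * Xt * B0 i with hP12
  set P22 := ∑ i, (B0 i)ᵀ * Xt * B0 i with hP22
  have hRinv : R⁻¹ᵀ = R⁻¹ := by
    have := hRsymm.inv
    simpa [Matrix.conjTranspose_eq_transpose_of_trivial] using this.eq
  haveI : Invertible R := hRpd.isUnit.invertible
  have hPi22 : P22.PosSemidef := by
    rw [hP22]
    refine psd_sum _ _ fun i _ => ?_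
    simpa [Matrix.conjTranspose_eq_transpose_of_trivial] using
      hXpsd.conjTranspose_mul_mul_same (B0 i)
  have hRc : (R + P22).PosDef := hRpd.add_posSemidef hPi22
  haveI : Invertible (R + P22) := hRc.isUnit.invertible
  have h1 : (fromBlocks (L * R⁻¹ * Lᵀ) L Lᵀ R).PosSemidef := by
    have := hRpd.posSemidef.conjTranspose_mul_mul_same
      (fromCols (R⁻¹ * Lᵀ) (1 : Matrix (Fin m) (Fin m) ℝ))
    convert this using 1
    rw [conjTranspose_fromCols_eq_fromRows_conjTranspose, fromRows_mul,
      fromRows_mul_fromCols]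
    simp [Matrix.conjTranspose_eq_transpose_of_trivial, Matrix.transpose_mul, hRinv,
      Matrix.mul_assoc, Matrix.mul_inv_cancel_left_of_invertible]
  have h2 : (fromBlocks P11 P12 P12ᵀ P22).PosSemidef := by
    have key : fromBlocks P11 P12 P12ᵀ P22 =
        ∑ i, (fromCols (A0 i) (B0 i))ᴴ * Xt * fromCols (A0 i) (B0 i) := by
      have hterm : ∀ i : Fin r, (fromCols (A0 i) (B0 i))ᴴ * Xt * fromCols (A0 i) (B0 i) =
          fromBlocks ((A0 i)ᵀ * Xt * A0 i) ((A0 i)ᵀ * Xt * B0 i)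
            ((B0 i)ᵀ * Xt * A0 i) ((B0 i)ᵀ * Xt * B0 i) := by
        intro i
        rw [conjTranspose_fromCols_eq_fromRows_conjTranspose, fromRows_mul,
          fromRows_mul_fromCols]
        simp [Matrix.conjTranspose_eq_transpose_of_trivial]
      simp only [hterm]
      have hXtT : Xtᵀ = Xt := by
        simpa [Matrix.conjTranspose_eq_transpose_of_trivial] using hXt.eq
      have h21 : P12ᵀ = ∑ i, (B0 i)ᵀ * Xt * A0 i := by
        rw [hP12, Matrix.transpose_sum]
        refine Finset.sum_congr rfl fun i _ => ?_
        rw [Matrix.transpose_mul, Matrix.transpose_mul, Matrix.transpose_transpose, hXtT,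
          Matrix.mul_assoc]
      rw [hP11, hP12, h21, hP22]
      ext (i | i) (j | j) <;>
        simp only [Matrix.sum_apply, fromBlocks_apply₁₁, fromBlocks_apply₁₂,
          fromBlocks_apply₂₁, fromBlocks_apply₂₂]
    rw [key]
    exact psd_sum _ _ fun i _ => hXpsd.conjTranspose_mul_mul_same _
  have hM : (fromBlocks (L * R⁻¹ * Lᵀ + P11) (L + P12) (L + P12)ᴴ (R + P22)).PosSemidef := by
    have heq : (fromBlocks (L * R⁻¹ * Lᵀ + P11) (L + P12) (L + P12)ᴴ (R + P22)) =
        fromBlocks (L * R⁻¹ * Lᵀ) L Lᵀ R + fromBlocks P11 P12 P12ᵀ P22 := by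
      rw [Matrix.fromBlocks_add]
      simp [Matrix.conjTranspose_eq_transpose_of_trivial, Matrix.transpose_add]
    rw [heq]
    exact h1.add h2
  have := (Matrix.PosDef.fromBlocks₂₂ (L * R⁻¹ * Lᵀ + P11) (L + P12) hRc).mp hM
  simpa [Matrix.conjTranspose_eq_transpose_of_trivial] using this
end
end

section
/- Let p, m be positive integers and let M = [M₁₁, M₁₂; M₁₂ᵀ, M₂₂] and N = [N₁₁, N₁₂; N₁₂ᵀ, N₂₂] be real symmetric (p+m)×(p+m) block matrices (with M₁₁, N₁₁ of size p×p and M₂₂, N₂₂ of size m×m) such that M₂₂ and N₂₂ are positive definite. If M ⪰ N, then the Schur complements satisfy M₁₁ − M₁₂ M₂₂⁻¹ M₁₂ᵀ ⪰ N₁₁ − N₁₂ N₂₂⁻¹ N₁₂ᵀ. -/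
open Matrix Filter

noncomputable section

/-- Monotonicity of the Schur complement: if M ⪰ N (symmetric block matrices with
positive definite lower-right blocks), then M₁₁ − M₁₂M₂₂⁻¹M₁₂ᵀ ⪰ N₁₁ − N₁₂N₂₂⁻¹N₁₂ᵀ. -/
theorem stmt5 (p m : ℕ) (hp : 0 < p) (hm : 0 < m)
    (M11 N11 : Matrix (Fin p) (Fin p) ℝ) (M12 N12 : Matrix (Fin p) (Fin m) ℝ)
    (M22 N22 : Matrix (Fin m) (Fin m) ℝ)
    (hM11 : M11.IsHermitian) (hN11 : N11.IsHermitian)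
    (hM22 : M22.PosDef) (hN22 : N22.PosDef)
    (hMN : (fromBlocks M11 M12 M12ᵀ M22 - fromBlocks N11 N12 N12ᵀ N22).PosSemidef) :
    (M11 - M12 * M22⁻¹ * M12ᵀ - (N11 - N12 * N22⁻¹ * N12ᵀ)).PosSemidef := by
  have hMdet : IsUnit M22.det := isUnit_iff_isUnit_det _ |>.1 hM22.isUnit
  have hNdet : IsUnit N22.det := isUnit_iff_isUnit_det _ |>.1 hN22.isUnit
  have hMs : M22ᵀ = M22 := by
    simpa [conjTranspose_eq_transpose_of_trivial] using hM22.isHermitian.eq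
  have hNs : N22ᵀ = N22 := by
    simpa [conjTranspose_eq_transpose_of_trivial] using hN22.isHermitian.eq
  have hMis : M22⁻¹ᵀ = M22⁻¹ := by rw [transpose_nonsing_inv, hMs]
  have hNis : N22⁻¹ᵀ = N22⁻¹ := by rw [transpose_nonsing_inv, hNs]
  set Y : Matrix (Fin m) (Fin p) ℝ := -(M22⁻¹ * M12ᵀ) with hY
  set Z : Matrix (Fin m) (Fin p) ℝ := Y + N22⁻¹ * N12ᵀ with hZ
  set K : Matrix (Fin p ⊕ Fin m) (Fin p) ℝ := fromRows 1 Y with hK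
  have key : M11 - M12 * M22⁻¹ * M12ᵀ - (N11 - N12 * N22⁻¹ * N12ᵀ) =
      Kᵀ * (fromBlocks M11 M12 M12ᵀ M22 - fromBlocks N11 N12 N12ᵀ N22) * K
        + Zᵀ * N22 * Z := by
    rw [hK, hZ, hY]
    simp only [transpose_fromRows, Matrix.mul_sub, Matrix.sub_mul,
      fromCols_mul_fromBlocks, fromCols_mul_fromRows,
      transpose_add, transpose_neg, transpose_mul, transpose_transpose,
      transpose_one, Matrix.one_mul, Matrix.mul_one, hMis, hNis, hMs, hNs,
      Matrix.neg_mul, Matrix.mul_neg, neg_neg, Matrix.add_mul, Matrix.mul_add]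
    simp only [Matrix.mul_assoc, Matrix.mul_nonsing_inv_cancel_left _ _ hMdet,
      Matrix.mul_nonsing_inv_cancel_left _ _ hNdet,
      Matrix.nonsing_inv_mul_cancel_left _ _ hMdet,
      Matrix.nonsing_inv_mul_cancel_left _ _ hNdet]
    abel
  rw [key]
  have hKH : Kᴴ = Kᵀ := conjTranspose_eq_transpose_of_trivial K
  have hZH : Zᴴ = Zᵀ := conjTranspose_eq_transpose_of_trivial Z
  exact (hKH ▸ hMN.conjTranspose_mul_mul_same K).add
    (hZH ▸ hN22.posSemidef.conjTranspose_mul_mul_same Z)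
end
end

section
/- Assume R ≻ 0. For symmetric matrices X, Y ∈ ℝ^{n×n} with X ⪰ Y ⪰ 0, one has Ω(X) ⪰ Ω(Y). -/
open Matrix Filter

noncomputable section

lemma posSemidef_sum' {k : Type*} [Fintype k] [DecidableEq k] {r : ℕ}
    (f : Fin r → Matrix k k ℝ)
    (h : ∀ i, (f i).PosSemidef) : (∑ i, f i).PosSemidef :=
  Finset.sum_induction f _ (fun _ _ ha hb => ha.add hb) Matrix.PosSemidef.zero (fun i _ => h i)

lemma psd_transpose_conj {n : ℕ} {k : Type*} [Fintype k] {Δ : Matrix (Fin n) (Fin n) ℝ}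
    (hΔ : Δ.PosSemidef)
    (M : Matrix (Fin n) k ℝ) : (Mᵀ * Δ * M).PosSemidef := by
  simpa [Matrix.conjTranspose_eq_transpose_of_trivial] using hΔ.conjTranspose_mul_mul_same M

lemma sum_fromBlocks {p q r : ℕ} (f : Fin r → Matrix (Fin p) (Fin p) ℝ)
    (g : Fin r → Matrix (Fin p) (Fin q) ℝ) (h : Fin r → Matrix (Fin q) (Fin p) ℝ)
    (k : Fin r → Matrix (Fin q) (Fin q) ℝ) :
    ∑ i, fromBlocks (f i) (g i) (h i) (k i)
      = fromBlocks (∑ i, f i) (∑ i, g i) (∑ i, h i) (∑ i, k i) := by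
  ext (a | a) (b | b) <;> simp [Matrix.sum_apply, fromBlocks]

lemma fromBlocks_sub' {p q : ℕ} (a a' : Matrix (Fin p) (Fin p) ℝ)
    (b b' : Matrix (Fin p) (Fin q) ℝ) (c c' : Matrix (Fin q) (Fin p) ℝ)
    (d d' : Matrix (Fin q) (Fin q) ℝ) :
    fromBlocks a b c d - fromBlocks a' b' c' d'
      = fromBlocks (a - a') (b - b') (c - c') (d - d') := by
  ext (i | i) (j | j) <;> simp [fromBlocks]

lemma conj_fromColumns {nn p q s t : ℕ} (Z : Matrix (Fin nn) (Fin nn) ℝ)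
    (a : Matrix (Fin nn) (Fin p) ℝ) (b : Matrix (Fin nn) (Fin q) ℝ)
    (c : Matrix (Fin nn) (Fin s) ℝ) (d : Matrix (Fin nn) (Fin t) ℝ) :
    (fromCols a b)ᵀ * Z * fromCols c d
      = fromBlocks (aᵀ * Z * c) (aᵀ * Z * d) (bᵀ * Z * c) (bᵀ * Z * d) := by
  rw [transpose_fromCols, fromRows_mul, fromRows_mul_fromCols]

lemma omega_key {n m r : ℕ}
    (A Q : Matrix (Fin n) (Fin n) ℝ) (B L : Matrix (Fin n) (Fin m) ℝ)
    (R : Matrix (Fin m) (Fin m) ℝ)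
    (A0 : Fin r → Matrix (Fin n) (Fin n) ℝ) (B0 : Fin r → Matrix (Fin n) (Fin m) ℝ)
    (X Y : Matrix (Fin n) (Fin n) ℝ)
    (hSxT : ((Rc R B0 X)⁻¹)ᵀ = (Rc R B0 X)⁻¹)
    (hSyT : ((Rc R B0 Y)⁻¹)ᵀ = (Rc R B0 Y)⁻¹)
    (hΔT : (X - Y)ᵀ = X - Y)
    (hx1 : (Rc R B0 X)⁻¹ * Rc R B0 X = 1) (hx2 : Rc R B0 X * (Rc R B0 X)⁻¹ = 1)
    (hy1 : (Rc R B0 Y)⁻¹ * Rc R B0 Y = 1) (hy2 : Rc R B0 Y * (Rc R B0 Y)⁻¹ = 1) :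
    Omega A B Q L R A0 B0 X - Omega A B Q L R A0 B0 Y =
      (∑ i, (fromCols (B0 i * ((Rc R B0 X)⁻¹ * Bᵀ))
          (A0 i - B0 i * ((Rc R B0 X)⁻¹ * (Lc L A0 B0 X)ᵀ)))ᵀ * (X - Y) *
        fromCols (B0 i * ((Rc R B0 X)⁻¹ * Bᵀ))
          (A0 i - B0 i * ((Rc R B0 X)⁻¹ * (Lc L A0 B0 X)ᵀ))) +
      (fromCols ((Rc R B0 X)⁻¹ * Bᵀ - (Rc R B0 Y)⁻¹ * Bᵀ)
          ((Rc R B0 Y)⁻¹ * (Lc L A0 B0 Y)ᵀ - (Rc R B0 X)⁻¹ * (Lc L A0 B0 X)ᵀ))ᵀ *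
        Rc R B0 Y *
      fromCols ((Rc R B0 X)⁻¹ * Bᵀ - (Rc R B0 Y)⁻¹ * Bᵀ)
          ((Rc R B0 Y)⁻¹ * (Lc L A0 B0 Y)ᵀ - (Rc R B0 X)⁻¹ * (Lc L A0 B0 X)ᵀ) := by
  set Rx := Rc R B0 X with hRxdef
  set Ry := Rc R B0 Y with hRydef
  set Sx := Rx⁻¹ with hSxdef
  set Sy := Ry⁻¹ with hSydef
  set Lx := Lc L A0 B0 X with hLxdef
  set Ly := Lc L A0 B0 Y with hLydef
  set Δ := X - Y with hΔdef
  set QX := Qc Q A0 X with hQXdef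
  set QY := Qc Q A0 Y with hQYdef
  set C := Sx * Bᵀ with hCdef
  set D := Sx * Lxᵀ with hDdef
  -- helper rewrites for inverses
  have hx1' : ∀ (E : Matrix (Fin m) (Fin n) ℝ), Sx * (Rx * E) = E := fun E => by
    rw [← Matrix.mul_assoc, hx1, Matrix.one_mul]
  have hx2' : ∀ (E : Matrix (Fin m) (Fin n) ℝ), Rx * (Sx * E) = E := fun E => by
    rw [← Matrix.mul_assoc, hx2, Matrix.one_mul]
  have hy1' : ∀ (E : Matrix (Fin m) (Fin n) ℝ), Sy * (Ry * E) = E := fun E => by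
    rw [← Matrix.mul_assoc, hy1, Matrix.one_mul]
  have hy2' : ∀ (E : Matrix (Fin m) (Fin n) ℝ), Ry * (Sy * E) = E := fun E => by
    rw [← Matrix.mul_assoc, hy2, Matrix.one_mul]
  -- primitive sums
  have hT11s : ∑ i, (A0 i)ᵀ * Δ * A0 i = QX - QY := by
    simp only [hQXdef, hQYdef, Qc, Pi11, hΔdef, Matrix.mul_sub, Matrix.sub_mul,
      Finset.sum_sub_distrib]
    abel
  have hT12s : ∑ i, (A0 i)ᵀ * Δ * B0 i = Lx - Ly := by
    simp only [hLxdef, hLydef, Lc, Pi12, hΔdef, Matrix.mul_sub, Matrix.sub_mul,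
      Finset.sum_sub_distrib]
    abel
  have hT21s : ∑ i, (B0 i)ᵀ * Δ * A0 i = Lxᵀ - Lyᵀ := by
    have : ∑ i, (B0 i)ᵀ * Δ * A0 i = (∑ i, (A0 i)ᵀ * Δ * B0 i)ᵀ := by
      rw [Matrix.transpose_sum]
      refine Finset.sum_congr rfl fun i _ => ?_
      rw [Matrix.transpose_mul, Matrix.transpose_mul, hΔT, Matrix.transpose_transpose,
        Matrix.mul_assoc]
    rw [this, hT12s, Matrix.transpose_sub]
  have hT22s : ∑ i, (B0 i)ᵀ * Δ * B0 i = Rx - Ry := by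
    simp only [hRxdef, hRydef, Rc, Pi22, hΔdef, Matrix.mul_sub, Matrix.sub_mul,
      Finset.sum_sub_distrib]
    abel
  -- block sums
  have e11 : ∑ i, (B0 i * C)ᵀ * Δ * (B0 i * C) = Cᵀ * (Rx - Ry) * C := by
    have h1 : ∀ i : Fin r, (B0 i * C)ᵀ * Δ * (B0 i * C)
        = Cᵀ * ((B0 i)ᵀ * Δ * B0 i) * C := by
      intro i; simp only [Matrix.transpose_mul, Matrix.mul_assoc]
    rw [Finset.sum_congr rfl fun i _ => h1 i, ← Matrix.sum_mul, ← Matrix.mul_sum, hT22s]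
  have e12 : ∑ i, (B0 i * C)ᵀ * Δ * (A0 i - B0 i * D)
      = Cᵀ * (Lxᵀ - Lyᵀ) - Cᵀ * (Rx - Ry) * D := by
    have h1 : ∀ i : Fin r, (B0 i * C)ᵀ * Δ * (A0 i - B0 i * D)
        = Cᵀ * ((B0 i)ᵀ * Δ * A0 i) - Cᵀ * ((B0 i)ᵀ * Δ * B0 i) * D := by
      intro i
      simp only [Matrix.transpose_mul, Matrix.mul_sub, Matrix.mul_assoc]
    rw [Finset.sum_congr rfl fun i _ => h1 i, Finset.sum_sub_distrib,
      ← Matrix.mul_sum, hT21s]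
    congr 1
    rw [← Matrix.sum_mul, ← Matrix.mul_sum, hT22s]
  have e21 : ∑ i, (A0 i - B0 i * D)ᵀ * Δ * (B0 i * C)
      = (Lx - Ly) * C - Dᵀ * (Rx - Ry) * C := by
    have h1 : ∀ i : Fin r, (A0 i - B0 i * D)ᵀ * Δ * (B0 i * C)
        = ((A0 i)ᵀ * Δ * B0 i) * C - Dᵀ * ((B0 i)ᵀ * Δ * B0 i) * C := by
      intro i
      simp only [Matrix.transpose_sub, Matrix.transpose_mul, Matrix.sub_mul,
        Matrix.mul_assoc]
    rw [Finset.sum_congr rfl fun i _ => h1 i, Finset.sum_sub_distrib,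
      ← Matrix.sum_mul, hT12s]
    congr 1
    rw [← Matrix.sum_mul, ← Matrix.mul_sum, hT22s]
  have e22 : ∑ i, (A0 i - B0 i * D)ᵀ * Δ * (A0 i - B0 i * D)
      = (QX - QY) - (Lx - Ly) * D - Dᵀ * (Lxᵀ - Lyᵀ) + Dᵀ * (Rx - Ry) * D := by
    have h1 : ∀ i : Fin r, (A0 i - B0 i * D)ᵀ * Δ * (A0 i - B0 i * D)
        = ((A0 i)ᵀ * Δ * A0 i - ((A0 i)ᵀ * Δ * B0 i) * D)
          - (Dᵀ * ((B0 i)ᵀ * Δ * A0 i) - Dᵀ * ((B0 i)ᵀ * Δ * B0 i) * D) := by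
      intro i
      simp only [Matrix.transpose_sub, Matrix.transpose_mul, Matrix.sub_mul,
        Matrix.mul_sub, Matrix.mul_assoc]
      abel
    rw [Finset.sum_congr rfl fun i _ => h1 i, Finset.sum_sub_distrib,
      Finset.sum_sub_distrib, Finset.sum_sub_distrib, hT11s, ← Matrix.sum_mul, hT12s]
    rw [← Matrix.mul_sum, hT21s]
    have : ∑ i, Dᵀ * ((B0 i)ᵀ * Δ * B0 i) * D = Dᵀ * (Rx - Ry) * D := by
      rw [← Matrix.sum_mul, ← Matrix.mul_sum, hT22s]
    rw [this]
    abel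
  -- expand Omega and blocks
  simp only [Omega, Gc, Ac, Hc]
  rw [fromBlocks_sub']
  simp only [conj_fromColumns]
  rw [sum_fromBlocks, e11, e12, e21, e22, fromBlocks_add]
  refine fromBlocks_inj.mpr ⟨?_, ?_, ?_, ?_⟩
  · simp only [hCdef, hDdef, Matrix.transpose_mul, Matrix.transpose_sub,
      Matrix.transpose_neg, Matrix.transpose_transpose, hSxT, hSyT, neg_sub, neg_neg,
      Matrix.neg_mul, Matrix.mul_neg, Matrix.mul_sub, Matrix.sub_mul,
      Matrix.mul_assoc, hx1', hx2', hy1', hy2', Matrix.mul_one, Matrix.one_mul]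
    abel
  · simp only [hCdef, hDdef, Matrix.transpose_mul, Matrix.transpose_sub,
      Matrix.transpose_neg, Matrix.transpose_transpose, hSxT, hSyT, neg_sub, neg_neg,
      Matrix.neg_mul, Matrix.mul_neg, Matrix.mul_sub, Matrix.sub_mul,
      Matrix.mul_assoc, hx1', hx2', hy1', hy2', Matrix.mul_one, Matrix.one_mul]
    abel
  · simp only [hCdef, hDdef, Matrix.transpose_mul, Matrix.transpose_sub,
      Matrix.transpose_neg, Matrix.transpose_transpose, hSxT, hSyT, neg_sub, neg_neg,
      Matrix.neg_mul, Matrix.mul_neg, Matrix.mul_sub, Matrix.sub_mul,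
      Matrix.mul_assoc, hx1', hx2', hy1', hy2', Matrix.mul_one, Matrix.one_mul]
    rw [show (Rc R B0 X)⁻¹ᵀ = Sx from hSxT, show (Rc R B0 Y)⁻¹ᵀ = Sy from hSyT,
      ← hLxdef, ← hLydef]
    abel
  · simp only [hCdef, hDdef, Matrix.transpose_mul, Matrix.transpose_sub,
      Matrix.transpose_neg, Matrix.transpose_transpose, hSxT, hSyT, neg_sub, neg_neg,
      Matrix.neg_mul, Matrix.mul_neg, Matrix.mul_sub, Matrix.sub_mul,
      Matrix.mul_assoc, hx1', hx2', hy1', hy2', Matrix.mul_one, Matrix.one_mul]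
    abel

/-- If R ≻ 0 then Ω is matrix-monotone on the PSD order: X ⪰ Y ⪰ 0 implies Ω(X) ⪰ Ω(Y). -/
theorem stmt6 (n m r : ℕ) (hn : 0 < n) (hm : 0 < m) (hr : 0 < r)
    (A Q : Matrix (Fin n) (Fin n) ℝ) (B L : Matrix (Fin n) (Fin m) ℝ)
    (R : Matrix (Fin m) (Fin m) ℝ)
    (A0 : Fin r → Matrix (Fin n) (Fin n) ℝ) (B0 : Fin r → Matrix (Fin n) (Fin m) ℝ)
    (hQ : Q.IsHermitian) (hRsymm : R.IsHermitian)
    (hRpd : R.PosDef)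
    (X Y : Matrix (Fin n) (Fin n) ℝ)
    (hX : X.IsHermitian) (hY : Y.IsHermitian)
    (hYpsd : Y.PosSemidef) (hXY : (X - Y).PosSemidef) :
    (Omega A B Q L R A0 B0 X - Omega A B Q L R A0 B0 Y).PosSemidef := by
  have hXpsd : X.PosSemidef := by simpa using hXY.add hYpsd
  have hpi : ∀ (Z : Matrix (Fin n) (Fin n) ℝ), Z.PosSemidef → (Pi22 B0 Z).PosSemidef := by
    intro Z hZ
    have : (∑ i, (B0 i)ᵀ * Z * B0 i).PosSemidef :=
      posSemidef_sum' _ fun i => psd_transpose_conj hZ (B0 i)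
    simpa [Pi22] using this
  have hRxpd : (Rc R B0 X).PosDef := by
    have : (R + Pi22 B0 X).PosDef := hRpd.add_posSemidef (hpi X hXpsd)
    simpa [Rc] using this
  have hRypd : (Rc R B0 Y).PosDef := by
    have : (R + Pi22 B0 Y).PosDef := hRpd.add_posSemidef (hpi Y hYpsd)
    simpa [Rc] using this
  have hux : IsUnit (Rc R B0 X).det := hRxpd.det_pos.ne'.isUnit
  have huy : IsUnit (Rc R B0 Y).det := hRypd.det_pos.ne'.isUnit
  have hx1 := Matrix.nonsing_inv_mul _ hux
  have hx2 := Matrix.mul_nonsing_inv _ hux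
  have hy1 := Matrix.nonsing_inv_mul _ huy
  have hy2 := Matrix.mul_nonsing_inv _ huy
  have hRxT : (Rc R B0 X)ᵀ = Rc R B0 X := by
    rw [← Matrix.conjTranspose_eq_transpose_of_trivial]; exact hRxpd.isHermitian
  have hRyT : (Rc R B0 Y)ᵀ = Rc R B0 Y := by
    rw [← Matrix.conjTranspose_eq_transpose_of_trivial]; exact hRypd.isHermitian
  have hSxT : ((Rc R B0 X)⁻¹)ᵀ = (Rc R B0 X)⁻¹ := by
    rw [Matrix.transpose_nonsing_inv, hRxT]
  have hSyT : ((Rc R B0 Y)⁻¹)ᵀ = (Rc R B0 Y)⁻¹ := by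
    rw [Matrix.transpose_nonsing_inv, hRyT]
  have hΔT : (X - Y)ᵀ = X - Y := by
    rw [← Matrix.conjTranspose_eq_transpose_of_trivial]; exact hXY.isHermitian
  rw [omega_key A Q B L R A0 B0 X Y hSxT hSyT hΔT hx1 hx2 hy1 hy2]
  refine Matrix.PosSemidef.add ?_ ?_
  · exact posSemidef_sum' _ fun i => psd_transpose_conj hXY _
  · exact psd_transpose_conj hRypd.posSemidef _
end
end

section
/- Assume the sign conditions hold, the kernel condition holds, and that the pair (Q − L R⁻¹ Lᵀ, A) is detectable. Let X̃, X_* ∈ ℝ^{n×n} be symmetric with 0 ⪯ X̃ ⪯ X_* and 𝓡(X_*) = 0. Then the matrix A_c(X̃) − G_c(X̃) X_* is stable. -/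
open Matrix Filter

noncomputable section

namespace SCAREProof

set_option linter.unusedSectionVars false
set_option maxHeartbeats 1000000

open Complex ComplexOrder

section Helpers

variable {ka kb kc : Type*} [Fintype ka] [Fintype kb] [Fintype kc]

lemma real_ct (M : Matrix ka kb ℝ) : Mᴴ = Mᵀ := by
  ext i j; simp [Matrix.conjTranspose_apply]

lemma cmap_mul (M : Matrix ka kb ℝ) (N : Matrix kb kc ℝ) :
    (M * N).map Complex.ofReal = M.map Complex.ofReal * N.map Complex.ofReal := by
  ext i j
  simp only [Matrix.map_apply, Matrix.mul_apply]
  push_cast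
  rfl

lemma cmap_add (M N : Matrix ka kb ℝ) :
    (M + N).map Complex.ofReal = M.map Complex.ofReal + N.map Complex.ofReal := by
  ext i j; simp

lemma cmap_sub (M N : Matrix ka kb ℝ) :
    (M - N).map Complex.ofReal = M.map Complex.ofReal - N.map Complex.ofReal := by
  ext i j; simp

lemma cmap_neg (M : Matrix ka kb ℝ) :
    (-M).map Complex.ofReal = -(M.map Complex.ofReal) := by
  ext i j; simp

lemma cmap_zero : ((0 : Matrix ka kb ℝ)).map Complex.ofReal = 0 := by
  ext i j; simp

lemma cmap_one [DecidableEq ka] : ((1 : Matrix ka ka ℝ)).map Complex.ofReal = 1 := by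
  ext i j; by_cases h : i = j <;> simp [Matrix.one_apply, h]

lemma cmap_transpose (M : Matrix ka kb ℝ) :
    (Mᵀ).map Complex.ofReal = (M.map Complex.ofReal)ᵀ := by
  ext i j; simp

lemma cmap_ct (M : Matrix ka kb ℝ) :
    (Mᵀ).map Complex.ofReal = (M.map Complex.ofReal)ᴴ := by
  ext i j; simp [Matrix.conjTranspose_apply, Complex.conj_ofReal]

lemma cmap_sum {ι : Type*} (s : Finset ι) (f : ι → Matrix ka kb ℝ) :
    ((∑ i ∈ s, f i).map Complex.ofReal) = ∑ i ∈ s, (f i).map Complex.ofReal := by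
  ext i j; simp [Matrix.map_apply, Matrix.sum_apply]

lemma sum_mulVec {ι : Type*} (s : Finset ι) (f : ι → Matrix ka kb ℂ) (v : kb → ℂ) :
    (∑ i ∈ s, f i) *ᵥ v = ∑ i ∈ s, (f i *ᵥ v) := by
  ext j
  simp [Matrix.mulVec, dotProduct, Matrix.sum_apply, Finset.sum_mul]
  rw [Finset.sum_comm]

lemma cmap_mulVec_star (M : Matrix ka kb ℝ) (z : kb → ℂ) :
    (M.map Complex.ofReal) *ᵥ (star z) = star ((M.map Complex.ofReal) *ᵥ z) := by
  ext i
  simp only [Matrix.mulVec, dotProduct, Pi.star_apply, star_sum]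
  refine Finset.sum_congr rfl fun j _ => ?_
  simp [Matrix.map_apply, Complex.star_def, Complex.conj_ofReal]

lemma posSemidef_cmap {M : Matrix ka ka ℝ} (h : M.PosSemidef) :
    (M.map Complex.ofReal).PosSemidef := by
  classical
  obtain ⟨B, hB⟩ : ∃ B : Matrix ka ka ℝ, M = star B * B := by
    open scoped MatrixOrder Matrix.Norms.L2Operator in
    exact CStarAlgebra.nonneg_iff_eq_star_mul_self.mp h.nonneg
  rw [hB, Matrix.star_eq_conjTranspose, real_ct, cmap_mul, cmap_ct]
  exact Matrix.posSemidef_conjTranspose_mul_self _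

lemma posSemidef_sum {ι : Type*} (s : Finset ι) (f : ι → Matrix ka ka ℝ)
    (h : ∀ i ∈ s, (f i).PosSemidef) : (∑ i ∈ s, f i).PosSemidef :=
  Finset.sum_induction f _ (fun _ _ ha hb => ha.add hb) Matrix.PosSemidef.zero h

lemma quad_conj (P : Matrix ka kb ℂ) (M : Matrix ka ka ℂ) (z : kb → ℂ) :
    star z ⬝ᵥ ((Pᴴ * M * P) *ᵥ z) = star (P *ᵥ z) ⬝ᵥ (M *ᵥ (P *ᵥ z)) := by
  rw [← Matrix.mulVec_mulVec, ← Matrix.mulVec_mulVec, Matrix.dotProduct_mulVec,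
    ← Matrix.star_mulVec]

lemma nonneg_add_eq_zero {a b : ℂ} (ha : 0 ≤ a) (hb : 0 ≤ b) (hab : a + b = 0) :
    a = 0 ∧ b = 0 := by
  rw [Complex.nonneg_iff] at ha hb
  have hre : a.re + b.re = 0 := by
    have := congrArg Complex.re hab; simpa using this
  constructor <;> apply Complex.ext <;> simp <;> linarith [ha.1, hb.1, ha.2, hb.2]

lemma cmap_fromRows (P : Matrix ka kc ℝ) (Q : Matrix kb kc ℝ) :
    (Matrix.fromRows P Q).map Complex.ofReal
      = Matrix.fromRows (P.map Complex.ofReal) (Q.map Complex.ofReal) := by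
  ext (i | i) j <;> rfl

end Helpers

lemma core_identity {n m : ℕ}
    (A X Qt N11 : Matrix (Fin n) (Fin n) ℝ)
    (B Lt N12 : Matrix (Fin n) (Fin m) ℝ)
    (Rt Rh g gh N22 : Matrix (Fin m) (Fin m) ℝ)
    (hg : g * Rt = 1) (hg' : Rt * g = 1)
    (hgh : gh * Rh = 1) (hgh' : Rh * gh = 1)
    (hR : Rh = Rt + N22)
    (hgT : gᵀ = g) (hghT : ghᵀ = gh) (hXT : Xᵀ = X) (hN22 : N22ᵀ = N22) :
    Aᵀ * X + X * A + (Qt + N11) -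
      (X * B + (Lt + N12)) * gh * (X * B + (Lt + N12))ᵀ
    = (A - B * (g * (Ltᵀ + Bᵀ * X)))ᵀ * X + X * (A - B * (g * (Ltᵀ + Bᵀ * X)))
      + (Qt - Lt * g * Ltᵀ) + (Bᵀ * X)ᵀ * g * (Bᵀ * X)
      + ((N11 - N12 * (g * (Ltᵀ + Bᵀ * X)) - (g * (Ltᵀ + Bᵀ * X))ᵀ * N12ᵀ
         + (g * (Ltᵀ + Bᵀ * X))ᵀ * (N22 * (g * (Ltᵀ + Bᵀ * X))))
        - (-N12ᵀ + N22 * (g * (Ltᵀ + Bᵀ * X)))ᵀ * gh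
            * (-N12ᵀ + N22 * (g * (Ltᵀ + Bᵀ * X)))) := by
  have h1 : g * N22 * gh = g - gh := by
    have e1 : g * Rh * gh = g := by
      rw [Matrix.mul_assoc, hgh', Matrix.mul_one]
    have e2 : g * Rh * gh = gh + g * N22 * gh := by
      rw [hR, Matrix.mul_add, Matrix.add_mul, hg, Matrix.one_mul]
    rw [e2] at e1
    linear_combination (norm := abel) e1
  have h2 : gh * N22 * g = g - gh := by
    have e1 : gh * Rh * g = g := by
      rw [hgh, Matrix.one_mul]
    have e2 : gh * Rh * g = gh + gh * N22 * g := by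
      rw [hR, Matrix.mul_add, Matrix.add_mul]
      rw [Matrix.mul_assoc gh Rt g, hg', Matrix.mul_one]
    rw [e2] at e1
    linear_combination (norm := abel) e1
  have w1 : ∀ Z : Matrix (Fin m) (Fin n) ℝ, g * (N22 * (gh * Z)) = g * Z - gh * Z := by
    intro Z
    rw [← Matrix.mul_assoc, ← Matrix.mul_assoc, h1, Matrix.sub_mul]
  have w2 : ∀ Z : Matrix (Fin m) (Fin n) ℝ, gh * (N22 * (g * Z)) = g * Z - gh * Z := by
    intro Z
    rw [← Matrix.mul_assoc, ← Matrix.mul_assoc, h2, Matrix.sub_mul]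
  simp only [Matrix.transpose_add, Matrix.transpose_sub, Matrix.transpose_mul,
    Matrix.transpose_neg, Matrix.transpose_transpose, hgT, hghT, hXT, hN22,
    Matrix.mul_add, Matrix.add_mul, Matrix.mul_sub, Matrix.sub_mul,
    Matrix.neg_mul, Matrix.mul_neg, Matrix.mul_assoc, w1, w2]
  abel

section PiLemmas

variable {n m r : ℕ} {A0 : Fin r → Matrix (Fin n) (Fin n) ℝ}
  {B0 : Fin r → Matrix (Fin n) (Fin m) ℝ} {X Y : Matrix (Fin n) (Fin n) ℝ}

lemma Pi11_sub : Pi11 A0 (X - Y) = Pi11 A0 X - Pi11 A0 Y := by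
  simp [Pi11, Matrix.mul_sub, Matrix.sub_mul, Finset.sum_sub_distrib]

lemma Pi12_sub : Pi12 A0 B0 (X - Y) = Pi12 A0 B0 X - Pi12 A0 B0 Y := by
  simp [Pi12, Matrix.mul_sub, Matrix.sub_mul, Finset.sum_sub_distrib]

lemma Pi22_sub : Pi22 B0 (X - Y) = Pi22 B0 X - Pi22 B0 Y := by
  simp [Pi22, Matrix.mul_sub, Matrix.sub_mul, Finset.sum_sub_distrib]

lemma Pi22_transpose (hX : Xᵀ = X) : (Pi22 B0 X)ᵀ = Pi22 B0 X := by
  simp [Pi22, Matrix.transpose_sum, Matrix.transpose_mul, Matrix.mul_assoc, hX]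

lemma Pi12_transpose (hX : Xᵀ = X) :
    (Pi12 A0 B0 X)ᵀ = ∑ i, (B0 i)ᵀ * (X * A0 i) := by
  simp [Pi12, Matrix.transpose_sum, Matrix.transpose_mul, hX, Matrix.mul_assoc]

lemma Pi22_psd (hX : X.PosSemidef) : (Pi22 B0 X).PosSemidef := by
  refine posSemidef_sum _ _ fun i _ => ?_
  have := hX.conjTranspose_mul_mul_same (B := B0 i)
  rwa [real_ct] at this

lemma piBlock_eq_sum (hX : Xᵀ = X) :
    PiBlock A0 B0 X =
      ∑ i, (Matrix.fromCols (A0 i) (B0 i))ᵀ * X * Matrix.fromCols (A0 i) (B0 i) := by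
  have hterm : ∀ i : Fin r,
      (Matrix.fromCols (A0 i) (B0 i))ᵀ * X * Matrix.fromCols (A0 i) (B0 i)
      = Matrix.fromBlocks ((A0 i)ᵀ * X * A0 i) ((A0 i)ᵀ * X * B0 i)
          ((B0 i)ᵀ * X * A0 i) ((B0 i)ᵀ * X * B0 i) := by
    intro i
    rw [Matrix.transpose_fromCols, Matrix.fromRows_mul, Matrix.fromRows_mul_fromCols]
  have hsum : ∑ i, (Matrix.fromCols (A0 i) (B0 i))ᵀ * X * Matrix.fromCols (A0 i) (B0 i)
      = Matrix.fromBlocks (Pi11 A0 X) (Pi12 A0 B0 X) (∑ i, (B0 i)ᵀ * X * A0 i) (Pi22 B0 X) := by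
    simp only [hterm, Pi11, Pi12, Pi22]
    ext (i | i) (j | j) <;>
      simp [Matrix.sum_apply]
  rw [hsum, PiBlock]
  congr 1
  simp [Pi12, Matrix.transpose_sum, Matrix.transpose_mul, hX, Matrix.mul_assoc]

lemma piBlock_psd (hX : Xᵀ = X) (hXp : X.PosSemidef) : (PiBlock A0 B0 X).PosSemidef := by
  rw [piBlock_eq_sum hX]
  refine posSemidef_sum _ _ fun i _ => ?_
  have := hXp.conjTranspose_mul_mul_same (B := Matrix.fromCols (A0 i) (B0 i))
  rwa [real_ct] at this

end PiLemmas

theorem stmt8_aux (n m r : ℕ) (hn : 0 < n) (hm : 0 < m) (hr : 0 < r)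
    (A Q : Matrix (Fin n) (Fin n) ℝ) (B L : Matrix (Fin n) (Fin m) ℝ)
    (R : Matrix (Fin m) (Fin m) ℝ)
    (A0 : Fin r → Matrix (Fin n) (Fin n) ℝ) (B0 : Fin r → Matrix (Fin n) (Fin m) ℝ)
    (hQ : Q.IsHermitian) (hRsymm : R.IsHermitian)
    (hRpd : R.PosDef) (hsign : (fromBlocks Q L Lᵀ R).PosSemidef)
    (hker : KernelCondition Q L R A0)
    (hdet : Detectable (Q - L * R⁻¹ * Lᵀ) A)
    (Xt Xs : Matrix (Fin n) (Fin n) ℝ)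
    (hXt : Xt.IsHermitian) (hXs : Xs.IsHermitian)
    (hXtpsd : Xt.PosSemidef) (hle : (Xs - Xt).PosSemidef)
    (hsol : scareRes A B Q L R A0 B0 Xs = 0) :
    IsStableMatrix (Ac A B L R A0 B0 Xt - Gc B R B0 Xt * Xs) := by
  classical
  -- basic symmetry facts
  have hXtT : Xtᵀ = Xt := by rw [← real_ct]; exact hXt
  have hXsT : Xsᵀ = Xs := by rw [← real_ct]; exact hXs
  have hRT : Rᵀ = R := by rw [← real_ct]; exact hRsymm
  have hXspsd : Xs.PosSemidef := by
    have h : Xs = Xt + (Xs - Xt) := by abel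
    rw [h]; exact hXtpsd.add hle
  -- abbreviations
  set Rt : Matrix (Fin m) (Fin m) ℝ := Rc R B0 Xt with hRt_def
  set Rh : Matrix (Fin m) (Fin m) ℝ := Rc R B0 Xs with hRh_def
  set Lt : Matrix (Fin n) (Fin m) ℝ := Lc L A0 B0 Xt with hLt_def
  set Qt : Matrix (Fin n) (Fin n) ℝ := Qc Q A0 Xt with hQt_def
  set N11 : Matrix (Fin n) (Fin n) ℝ := Pi11 A0 Xs - Pi11 A0 Xt with hN11_def
  set N12 : Matrix (Fin n) (Fin m) ℝ := Pi12 A0 B0 Xs - Pi12 A0 B0 Xt with hN12_def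
  set N22 : Matrix (Fin m) (Fin m) ℝ := Pi22 B0 Xs - Pi22 B0 Xt with hN22_def
  -- positive definiteness of Rt, Rh
  have hRtpd : Rt.PosDef := by
    rw [hRt_def, Rc]; exact hRpd.add_posSemidef (Pi22_psd hXtpsd)
  have hRhpd : Rh.PosDef := by
    rw [hRh_def, Rc]; exact hRpd.add_posSemidef (Pi22_psd hXspsd)
  have hRtdet : IsUnit Rt.det := hRtpd.det_pos.ne'.isUnit
  have hRhdet : IsUnit Rh.det := hRhpd.det_pos.ne'.isUnit
  have hg : Rt⁻¹ * Rt = 1 := Matrix.nonsing_inv_mul _ hRtdet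
  have hg' : Rt * Rt⁻¹ = 1 := Matrix.mul_nonsing_inv _ hRtdet
  have hgh : Rh⁻¹ * Rh = 1 := Matrix.nonsing_inv_mul _ hRhdet
  have hgh' : Rh * Rh⁻¹ = 1 := Matrix.mul_nonsing_inv _ hRhdet
  have hRtT : Rtᵀ = Rt := by
    rw [hRt_def, Rc, Matrix.transpose_add, hRT, Pi22_transpose hXtT]
  have hRhT : Rhᵀ = Rh := by
    rw [hRh_def, Rc, Matrix.transpose_add, hRT, Pi22_transpose hXsT]
  have hgT : (Rt⁻¹)ᵀ = Rt⁻¹ := by rw [Matrix.transpose_nonsing_inv, hRtT]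
  have hghT : (Rh⁻¹)ᵀ = Rh⁻¹ := by rw [Matrix.transpose_nonsing_inv, hRhT]
  have hRh_split : Rh = Rt + N22 := by
    rw [hRh_def, hRt_def, hN22_def, Rc, Rc]; abel
  have hN22T : N22ᵀ = N22 := by
    rw [hN22_def, Matrix.transpose_sub, Pi22_transpose hXsT, Pi22_transpose hXtT]
  have hQsplit : Qc Q A0 Xs = Qt + N11 := by
    rw [hQt_def, hN11_def, Qc, Qc]; abel
  have hLsplit : Lc L A0 B0 Xs = Lt + N12 := by
    rw [hLt_def, hN12_def, Lc, Lc]; abel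
  -- the closed-loop matrix
  have hM0 : Ac A B L R A0 B0 Xt - Gc B R B0 Xt * Xs
      = A - B * (Rt⁻¹ * (Ltᵀ + Bᵀ * Xs)) := by
    rw [Ac, Gc]
    simp only [Matrix.mul_add, Matrix.mul_assoc, sub_sub]
    rfl
  set M0 : Matrix (Fin n) (Fin n) ℝ := Ac A B L R A0 B0 Xt - Gc B R B0 Xt * Xs with hM0_def
  set K : Matrix (Fin m) (Fin n) ℝ := Rt⁻¹ * (Ltᵀ + Bᵀ * Xs) with hK_def
  -- the master identity
  have key := core_identity A Xs Qt N11 B Lt N12 Rt Rh Rt⁻¹ Rh⁻¹ N22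
    hg hg' hgh hgh' hRh_split hgT hghT hXsT hN22T
  have hsol' : Aᵀ * Xs + Xs * A + (Qt + N11) -
      (Xs * B + (Lt + N12)) * Rh⁻¹ * (Xs * B + (Lt + N12))ᵀ = 0 := by
    have h := hsol
    rw [scareRes, hQsplit, hLsplit] at h
    exact h
  rw [key] at hsol'
  rw [← hM0] at hsol'
  -- named pieces
  set P1 : Matrix (Fin n) (Fin n) ℝ := Qt - Lt * Rt⁻¹ * Ltᵀ with hP1_def
  set P2 : Matrix (Fin n) (Fin n) ℝ := (Bᵀ * Xs)ᵀ * Rt⁻¹ * (Bᵀ * Xs) with hP2_def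
  set T : Matrix (Fin n) (Fin n) ℝ :=
    ((N11 - N12 * K - Kᵀ * N12ᵀ + Kᵀ * (N22 * K))
      - (-N12ᵀ + N22 * K)ᵀ * Rh⁻¹ * (-N12ᵀ + N22 * K)) with hT_def
  have hMaster : M0ᵀ * Xs + Xs * M0 + P1 + P2 + T = 0 := hsol'
  clear hsol' key
  -- P1 is psd: P1 = Wrᵀ * Ξ * Wr with Ξ psd
  set Wr : Matrix (Fin n ⊕ Fin m) (Fin n) ℝ :=
    Matrix.fromRows (1 : Matrix (Fin n) (Fin n) ℝ) (-(Rt⁻¹ * Ltᵀ)) with hWr_def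
  set Xi : Matrix (Fin n ⊕ Fin m) (Fin n ⊕ Fin m) ℝ :=
    fromBlocks Qt Lt Ltᵀ Rt with hXi_def
  have hXi_split : Xi = fromBlocks Q L Lᵀ R + PiBlock A0 B0 Xt := by
    rw [hXi_def, PiBlock, Matrix.fromBlocks_add, hQt_def, Qc, hLt_def, Lc, hRt_def, Rc,
      Matrix.transpose_add]
  have hXipsd : Xi.PosSemidef := by
    rw [hXi_split]; exact hsign.add (piBlock_psd hXtT hXtpsd)
  have hXiWr : Xi * Wr = Matrix.fromRows (Qt - Lt * (Rt⁻¹ * Ltᵀ)) 0 := by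
    rw [hXi_def, hWr_def, Matrix.fromBlocks_mul_fromRows]
    simp only [Matrix.mul_one, Matrix.mul_neg, ← sub_eq_add_neg]
    rw [← Matrix.mul_assoc Rt Rt⁻¹ Ltᵀ, hg', Matrix.one_mul, sub_self]
  have hH : P1 = Wrᵀ * Xi * Wr := by
    rw [Matrix.mul_assoc, hXiWr, hWr_def, Matrix.transpose_fromRows,
      Matrix.fromCols_mul_fromRows, Matrix.mul_zero, add_zero, Matrix.transpose_one,
      Matrix.one_mul, hP1_def, Matrix.mul_assoc]
  have hP1psd : P1.PosSemidef := by
    rw [hH, ← real_ct]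
    exact hXipsd.conjTranspose_mul_mul_same Wr
  -- P2 is psd
  have hginvpsd : (Rt⁻¹).PosSemidef := hRtpd.inv.posSemidef
  have hP2psd : P2.PosSemidef := by
    rw [hP2_def, ← real_ct]
    exact hginvpsd.conjTranspose_mul_mul_same (Bᵀ * Xs)
  -- T is psd : T = vᵀ * Θ * v with Θ psd (Schur complement argument)
  set Nb : Matrix (Fin n ⊕ Fin m) (Fin n ⊕ Fin m) ℝ := PiBlock A0 B0 (Xs - Xt) with hNb_def
  have hNbpsd : Nb.PosSemidef := by
    rw [hNb_def]
    refine piBlock_psd ?_ hle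
    rw [Matrix.transpose_sub, hXsT, hXtT]
  have hNbT : Nbᵀ = Nb := by rw [← real_ct]; exact hNbpsd.isHermitian
  have hNblocks : Nb = fromBlocks N11 N12 N12ᵀ N22 := by
    rw [hNb_def, PiBlock, Pi11_sub, Pi12_sub, Pi22_sub]
  set E : Matrix (Fin n ⊕ Fin m) (Fin m) ℝ :=
    Matrix.fromRows (0 : Matrix (Fin n) (Fin m) ℝ) (1 : Matrix (Fin m) (Fin m) ℝ) with hE_def
  set E2 : Matrix ((Fin n ⊕ Fin m) ⊕ Fin m) (Fin m) ℝ :=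
    Matrix.fromRows (0 : Matrix (Fin n ⊕ Fin m) (Fin m) ℝ)
      (1 : Matrix (Fin m) (Fin m) ℝ) with hE2_def
  set Nc : Matrix (Fin n ⊕ Fin m) (Fin m) ℝ := Matrix.fromRows N12 N22 with hNc_def
  have hNE : Nb * E = Nc := by
    rw [hNblocks, hE_def, Matrix.fromBlocks_mul_fromRows, hNc_def]
    simp
  have hEN : Eᵀ * Nb = Ncᵀ := by
    have h : Eᵀ * Nb = (Nbᵀ * E)ᵀ := by
      rw [Matrix.transpose_mul, Matrix.transpose_transpose]
    rw [h, hNbT, hNE]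
  set V : Matrix (Fin n ⊕ Fin m) ((Fin n ⊕ Fin m) ⊕ Fin m) ℝ :=
    Matrix.fromCols (1 : Matrix (Fin n ⊕ Fin m) (Fin n ⊕ Fin m) ℝ) E with hV_def
  have hNcE : Ncᵀ * E = N22 := by
    rw [hNc_def, Matrix.transpose_fromRows, hE_def, Matrix.fromCols_mul_fromRows,
      Matrix.mul_zero, Matrix.mul_one, zero_add, hN22T]
  have hU1 : Vᵀ * Nb * V = fromBlocks Nb Nc Ncᵀ N22 := by
    rw [hV_def, Matrix.transpose_fromCols, Matrix.transpose_one, Matrix.fromRows_mul,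
      Matrix.one_mul, hEN, Matrix.fromRows_mul_fromCols, Matrix.mul_one, hNE,
      Matrix.mul_one, hNcE]
  have hU2 : E2 * Rt * E2ᵀ = fromBlocks 0 0 0 Rt := by
    rw [hE2_def, Matrix.fromRows_mul, Matrix.zero_mul, Matrix.one_mul,
      Matrix.transpose_fromRows, Matrix.transpose_zero, Matrix.transpose_one,
      Matrix.mul_fromCols, Matrix.mul_zero, Matrix.mul_one,
      ← Matrix.fromRows_zero, Matrix.fromCols_fromRows_eq_fromBlocks]
  have hBig : fromBlocks Nb Nc Ncᵀ Rh = Vᵀ * Nb * V + E2 * Rt * E2ᵀ := by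
    rw [hU1, hU2, Matrix.fromBlocks_add, add_zero, add_zero, add_zero, hRh_split,
      add_comm Rt N22]
  have hBigpsd : (fromBlocks Nb Nc Ncᵀ Rh).PosSemidef := by
    rw [hBig]
    have p1 : (Vᵀ * Nb * V).PosSemidef := by
      rw [← real_ct]; exact hNbpsd.conjTranspose_mul_mul_same V
    have p2 : (E2 * Rt * E2ᵀ).PosSemidef := by
      rw [← real_ct]; exact hRtpd.posSemidef.mul_mul_conjTranspose_same E2
    exact p1.add p2
  haveI : Invertible Rh := Rh.invertibleOfIsUnitDet hRhdet
  have hThetapsd : (Nb - Nc * Rh⁻¹ * Ncᵀ).PosSemidef := by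
    have h := (Matrix.PosDef.fromBlocks₂₂ Nb Nc hRhpd).mp
    rw [real_ct] at h
    exact h hBigpsd
  set v : Matrix (Fin n ⊕ Fin m) (Fin n) ℝ :=
    Matrix.fromRows (-1 : Matrix (Fin n) (Fin n) ℝ) K with hv_def
  have hvNb : vᵀ * Nb * v = N11 - N12 * K - Kᵀ * N12ᵀ + Kᵀ * (N22 * K) := by
    rw [hNblocks, hv_def, Matrix.transpose_fromRows, Matrix.transpose_neg,
      Matrix.transpose_one, Matrix.fromCols_mul_fromBlocks,
      Matrix.fromCols_mul_fromRows]
    simp only [Matrix.neg_mul, Matrix.one_mul, Matrix.mul_neg, Matrix.mul_one,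
      Matrix.add_mul, Matrix.mul_add, Matrix.mul_assoc, neg_neg, neg_add]
    abel
  have hJt : (-N12ᵀ + N22 * K)ᵀ = -N12 + Kᵀ * N22 := by
    rw [Matrix.transpose_add, Matrix.transpose_neg, Matrix.transpose_transpose,
      Matrix.transpose_mul N22 K, hN22T]
  have hvNc : vᵀ * Nc = -N12 + Kᵀ * N22 := by
    rw [hv_def, hNc_def, Matrix.transpose_fromRows, Matrix.transpose_neg,
      Matrix.transpose_one, Matrix.fromCols_mul_fromRows, Matrix.neg_mul,
      Matrix.one_mul]
  have hNcv : Ncᵀ * v = -N12ᵀ + N22 * K := by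
    rw [hNc_def, Matrix.transpose_fromRows, hv_def,
      Matrix.fromCols_mul_fromRows, Matrix.mul_neg, Matrix.mul_one, hN22T]
  have hT : T = vᵀ * (Nb - Nc * Rh⁻¹ * Ncᵀ) * v := by
    have hexp : vᵀ * (Nb - Nc * Rh⁻¹ * Ncᵀ) * v
        = vᵀ * Nb * v - vᵀ * (Nc * Rh⁻¹ * Ncᵀ) * v := by
      rw [Matrix.mul_sub, Matrix.sub_mul]
    have hc : vᵀ * (Nc * Rh⁻¹ * Ncᵀ) * v
        = (-N12 + Kᵀ * N22) * Rh⁻¹ * (-N12ᵀ + N22 * K) := by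
      rw [← hvNc, ← hNcv]
      simp only [Matrix.mul_assoc]
    rw [hT_def, hJt, hexp, hvNb, hc]
  have hTpsd : T.PosSemidef := by
    rw [hT, ← real_ct]
    exact hThetapsd.conjTranspose_mul_mul_same v
  -- now the spectral argument
  intro μ hμ
  by_contra hre
  push_neg at hre
  -- eigenvector
  have hdetz : ((algebraMap ℂ (Matrix (Fin n) (Fin n) ℂ) μ) - M0.map Complex.ofReal).det = 0 := by
    by_contra hd
    exact (spectrum.mem_iff.mp hμ) ((Matrix.isUnit_iff_isUnit_det _).mpr
      (isUnit_iff_ne_zero.mpr hd))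
  obtain ⟨z, hznz, hzeq⟩ := Matrix.exists_mulVec_eq_zero_iff.mpr hdetz
  have heig : (M0.map Complex.ofReal) *ᵥ z = μ • z := by
    rw [Matrix.sub_mulVec, sub_eq_zero] at hzeq
    rw [← hzeq, Algebra.algebraMap_eq_smul_one, Matrix.smul_mulVec,
      Matrix.one_mulVec]
  -- quadratic forms
  set q : ℂ := star z ⬝ᵥ ((Xs.map Complex.ofReal) *ᵥ z) with hq_def
  have hCm : (M0ᵀ * Xs).map Complex.ofReal + (Xs * M0).map Complex.ofReal
      + P1.map Complex.ofReal + P2.map Complex.ofReal + T.map Complex.ofReal = 0 := by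
    rw [← cmap_add, ← cmap_add, ← cmap_add, ← cmap_add, hMaster, cmap_zero]
  have hQsum : star z ⬝ᵥ (((M0ᵀ * Xs).map Complex.ofReal) *ᵥ z)
      + star z ⬝ᵥ (((Xs * M0).map Complex.ofReal) *ᵥ z)
      + star z ⬝ᵥ ((P1.map Complex.ofReal) *ᵥ z)
      + star z ⬝ᵥ ((P2.map Complex.ofReal) *ᵥ z)
      + star z ⬝ᵥ ((T.map Complex.ofReal) *ᵥ z) = 0 := by
    have h := congrArg (fun Mz : Matrix (Fin n) (Fin n) ℂ => star z ⬝ᵥ (Mz *ᵥ z)) hCm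
    simpa [Matrix.add_mulVec, dotProduct_add, Matrix.zero_mulVec,
      dotProduct_zero] using h
  have h_s0 : star z ⬝ᵥ (((M0ᵀ * Xs).map Complex.ofReal) *ᵥ z) = star μ * q := by
    rw [cmap_mul, ← Matrix.mulVec_mulVec, Matrix.dotProduct_mulVec, cmap_transpose,
      Matrix.vecMul_transpose, cmap_mulVec_star, heig, star_smul,
      smul_dotProduct, smul_eq_mul, hq_def]
  have h_s0' : star z ⬝ᵥ (((Xs * M0).map Complex.ofReal) *ᵥ z) = μ * q := by
    rw [cmap_mul, ← Matrix.mulVec_mulVec, heig, Matrix.mulVec_smul,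
      dotProduct_smul, smul_eq_mul, hq_def]
  rw [h_s0, h_s0'] at hQsum
  -- nonnegativity
  have hq0 : 0 ≤ q := (posSemidef_cmap hXspsd).dotProduct_mulVec_nonneg z
  have hs1 : 0 ≤ star z ⬝ᵥ ((P1.map Complex.ofReal) *ᵥ z) := (posSemidef_cmap hP1psd).dotProduct_mulVec_nonneg z
  have hs2 : 0 ≤ star z ⬝ᵥ ((P2.map Complex.ofReal) *ᵥ z) := (posSemidef_cmap hP2psd).dotProduct_mulVec_nonneg z
  have hs3 : 0 ≤ star z ⬝ᵥ ((T.map Complex.ofReal) *ᵥ z) := (posSemidef_cmap hTpsd).dotProduct_mulVec_nonneg z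
  rw [Complex.nonneg_iff] at hq0 hs1 hs2 hs3
  have hre_eq := congrArg Complex.re hQsum
  simp only [Complex.add_re, Complex.mul_re, Complex.zero_re, Complex.star_def,
    Complex.conj_re, Complex.conj_im] at hre_eq
  rw [← hq0.2] at hre_eq
  have hmulq : 0 ≤ μ.re * q.re := mul_nonneg hre hq0.1
  have hs1z : (star z ⬝ᵥ ((P1.map Complex.ofReal) *ᵥ z)) = 0 := by
    apply Complex.ext
    · simp only [Complex.zero_re]; linarith [hs1.1, hs2.1, hs3.1]
    · simp only [Complex.zero_im]; exact hs1.2.symm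
  have hs2z : (star z ⬝ᵥ ((P2.map Complex.ofReal) *ᵥ z)) = 0 := by
    apply Complex.ext
    · simp only [Complex.zero_re]; linarith [hs1.1, hs2.1, hs3.1]
    · simp only [Complex.zero_im]; exact hs2.2.symm
  -- from s2 = 0 : Bᵀ Xs z = 0
  have hw : ((Bᵀ * Xs).map Complex.ofReal) *ᵥ z = 0 := by
    have e : (P2.map Complex.ofReal)
        = ((Bᵀ * Xs).map Complex.ofReal)ᴴ * ((Rt⁻¹).map Complex.ofReal)
            * ((Bᵀ * Xs).map Complex.ofReal) := by
      rw [hP2_def, cmap_mul, cmap_mul, cmap_ct]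
    rw [e, quad_conj] at hs2z
    have hz1 : ((Rt⁻¹).map Complex.ofReal) *ᵥ (((Bᵀ * Xs).map Complex.ofReal) *ᵥ z) = 0 :=
      ((posSemidef_cmap hginvpsd).dotProduct_mulVec_zero_iff _).mp hs2z
    have hcan : (Rt.map Complex.ofReal) * ((Rt⁻¹).map Complex.ofReal) = 1 := by
      rw [← cmap_mul, hg', cmap_one]
    calc ((Bᵀ * Xs).map Complex.ofReal) *ᵥ z
        = ((Rt.map Complex.ofReal) * ((Rt⁻¹).map Complex.ofReal)) *ᵥ
            (((Bᵀ * Xs).map Complex.ofReal) *ᵥ z) := by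
          rw [hcan, Matrix.one_mulVec]
      _ = (Rt.map Complex.ofReal) *ᵥ (((Rt⁻¹).map Complex.ofReal) *ᵥ
            (((Bᵀ * Xs).map Complex.ofReal) *ᵥ z)) :=
          (Matrix.mulVec_mulVec _ _ _).symm
      _ = 0 := by rw [hz1, Matrix.mulVec_zero]
  -- from s1 = 0 : kernel information
  set u := ((-(Rt⁻¹ * Ltᵀ)).map Complex.ofReal) *ᵥ z with hu_def
  have hy : (Wr.map Complex.ofReal) *ᵥ z = Sum.elim z u := by
    rw [hWr_def, cmap_fromRows, Matrix.fromRows_mulVec, cmap_one, Matrix.one_mulVec, hu_def]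
  have hXiz : ((fromBlocks Q L Lᵀ R).map Complex.ofReal) *ᵥ (Sum.elim z u) = 0 := by
    have e : (P1.map Complex.ofReal)
        = ((Wr).map Complex.ofReal)ᴴ * (Xi.map Complex.ofReal) * ((Wr).map Complex.ofReal) := by
      rw [hH, cmap_mul, cmap_mul, cmap_ct]
    rw [e, quad_conj, hy] at hs1z
    have hXic : Xi.map Complex.ofReal
        = (fromBlocks Q L Lᵀ R).map Complex.ofReal + (PiBlock A0 B0 Xt).map Complex.ofReal := by
      rw [hXi_split, cmap_add]
    rw [hXic, Matrix.add_mulVec, dotProduct_add] at hs1z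
    have h0 := nonneg_add_eq_zero
      ((posSemidef_cmap hsign).dotProduct_mulVec_nonneg (Sum.elim z u))
      ((posSemidef_cmap (piBlock_psd hXtT hXtpsd)).dotProduct_mulVec_nonneg (Sum.elim z u)) hs1z
    exact ((posSemidef_cmap hsign).dotProduct_mulVec_zero_iff _).mp h0.1
  rw [Matrix.fromBlocks_map, Matrix.fromBlocks_mulVec, Sum.elim_comp_inl,
    Sum.elim_comp_inr] at hXiz
  have e1 : (Q.map Complex.ofReal) *ᵥ z + (L.map Complex.ofReal) *ᵥ u = 0 := by
    funext i
    have h := congrFun hXiz (Sum.inl i)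
    simpa using h
  have e2 : (Lᵀ.map Complex.ofReal) *ᵥ z + (R.map Complex.ofReal) *ᵥ u = 0 := by
    funext i
    have h := congrFun hXiz (Sum.inr i)
    simpa using h
  -- (Q - L R⁻¹ Lᵀ) z = 0
  have hRdet : IsUnit R.det := hRpd.det_pos.ne'.isUnit
  have hRinv : ((R⁻¹).map Complex.ofReal) * (R.map Complex.ofReal) = 1 := by
    rw [← cmap_mul, Matrix.nonsing_inv_mul _ hRdet, cmap_one]
  have hkerz : ((Q - L * R⁻¹ * Lᵀ).map Complex.ofReal) *ᵥ z = 0 := by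
    have hLz : (Lᵀ.map Complex.ofReal) *ᵥ z = -((R.map Complex.ofReal) *ᵥ u) :=
      eq_neg_of_add_eq_zero_left e2
    rw [cmap_sub, cmap_mul, cmap_mul, Matrix.sub_mulVec, ← Matrix.mulVec_mulVec,
      ← Matrix.mulVec_mulVec, hLz, Matrix.mulVec_neg, Matrix.mulVec_mulVec,
      hRinv, Matrix.one_mulVec, Matrix.mulVec_neg, sub_neg_eq_add]
    exact e1
  obtain ⟨hLker, hA0ker⟩ := hker z hkerz
  -- Ltᵀ z = 0
  have hPi12z : (((Pi12 A0 B0 Xt)ᵀ).map Complex.ofReal) *ᵥ z = 0 := by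
    rw [Pi12_transpose hXtT, cmap_sum, sum_mulVec]
    refine Finset.sum_eq_zero fun i _ => ?_
    rw [cmap_mul, cmap_mul, ← Matrix.mulVec_mulVec, ← Matrix.mulVec_mulVec,
      hA0ker i, Matrix.mulVec_zero, Matrix.mulVec_zero]
  have hLtz : ((Ltᵀ).map Complex.ofReal) *ᵥ z = 0 := by
    rw [hLt_def, Lc, Matrix.transpose_add, cmap_add, Matrix.add_mulVec, hLker,
      hPi12z, add_zero]
  -- M0 z = A z
  have hMA : (M0.map Complex.ofReal) *ᵥ z = (A.map Complex.ofReal) *ᵥ z := by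
    rw [hM0, cmap_sub, Matrix.sub_mulVec, cmap_mul, ← Matrix.mulVec_mulVec,
      cmap_mul, ← Matrix.mulVec_mulVec, cmap_add, Matrix.add_mulVec, hLtz, hw,
      add_zero, Matrix.mulVec_zero, Matrix.mulVec_zero, sub_zero]
  have hAz : (A.map Complex.ofReal - μ • 1) *ᵥ z = 0 := by
    rw [Matrix.sub_mulVec, ← hMA, heig, Matrix.smul_mulVec, Matrix.one_mulVec,
      sub_self]
  exact hznz (hdet μ z hre hAz hkerz)

end SCAREProof

/-- Under the sign conditions, the kernel condition and detectability of
(Q − LR⁻¹Lᵀ, A), if 0 ⪯ X̃ ⪯ X_* and 𝓡(X_*) = 0, then A_c(X̃) − G_c(X̃)X_* is stable. -/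
theorem stmt8 (n m r : ℕ) (hn : 0 < n) (hm : 0 < m) (hr : 0 < r)
    (A Q : Matrix (Fin n) (Fin n) ℝ) (B L : Matrix (Fin n) (Fin m) ℝ)
    (R : Matrix (Fin m) (Fin m) ℝ)
    (A0 : Fin r → Matrix (Fin n) (Fin n) ℝ) (B0 : Fin r → Matrix (Fin n) (Fin m) ℝ)
    (hQ : Q.IsHermitian) (hRsymm : R.IsHermitian)
    (hRpd : R.PosDef) (hsign : (fromBlocks Q L Lᵀ R).PosSemidef)
    (hker : KernelCondition Q L R A0)
    (hdet : Detectable (Q - L * R⁻¹ * Lᵀ) A)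
    (Xt Xs : Matrix (Fin n) (Fin n) ℝ)
    (hXt : Xt.IsHermitian) (hXs : Xs.IsHermitian)
    (hXtpsd : Xt.PosSemidef) (hle : (Xs - Xt).PosSemidef)
    (hsol : scareRes A B Q L R A0 B0 Xs = 0) :
    IsStableMatrix (Ac A B L R A0 B0 Xt - Gc B R B0 Xt * Xs) :=
  SCAREProof.stmt8_aux n m r hn hm hr A Q B L R A0 B0 hQ hRsymm hRpd hsign hker hdet Xt Xs hXt hXs hXtpsd hle hsol
end
end

section
/- Assume R ≻ 0. Let X, Y ∈ ℝ^{n×n} be symmetric with 0 ⪯ Y ⪯ X, and suppose [X, −Iₙ] Ω(Y) [X; −Iₙ] = 0 (i.e., X solves the CARE whose coefficients are frozen at Y). Then 𝓡(X) ⪰ 0. -/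
open Matrix Filter

noncomputable section

lemma auxSumPSD {ι : Type*} {N : Type*} [Fintype N] (s : Finset ι)
    (f : ι → Matrix N N ℝ) (h : ∀ i ∈ s, (f i).PosSemidef) :
    (∑ i ∈ s, f i).PosSemidef := by
  induction s using Finset.cons_induction with
  | empty => simpa using Matrix.PosSemidef.zero
  | cons a s ha ih =>
    rw [Finset.sum_cons]
    exact (h a (Finset.mem_cons_self a s)).add
      (ih fun i hi => h i (Finset.mem_cons.2 (Or.inr hi)))

lemma auxCongPSD {N P : Type*} [Fintype N] [Fintype P] [DecidableEq N] {D : Matrix N N ℝ}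
    (hD : D.PosSemidef) (E : Matrix N P ℝ) : (Eᵀ * D * E).PosSemidef := by
  rw [← Matrix.conjTranspose_eq_transpose_of_trivial]
  exact hD.conjTranspose_mul_mul_same E

set_option maxHeartbeats 1000000 in
/-- If R ≻ 0, 0 ⪯ Y ⪯ X and X solves the CARE frozen at Y, then 𝓡(X) ⪰ 0. -/
theorem stmt9 (n m r : ℕ) (hn : 0 < n) (hm : 0 < m) (hr : 0 < r)
    (A Q : Matrix (Fin n) (Fin n) ℝ) (B L : Matrix (Fin n) (Fin m) ℝ)
    (R : Matrix (Fin m) (Fin m) ℝ)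
    (A0 : Fin r → Matrix (Fin n) (Fin n) ℝ) (B0 : Fin r → Matrix (Fin n) (Fin m) ℝ)
    (hQ : Q.IsHermitian) (hRsymm : R.IsHermitian)
    (hRpd : R.PosDef)
    (X Y : Matrix (Fin n) (Fin n) ℝ)
    (hX : X.IsHermitian) (hY : Y.IsHermitian)
    (hYpsd : Y.PosSemidef) (hYX : (X - Y).PosSemidef)
    (hfroz : (stackNegI X)ᵀ * Omega A B Q L R A0 B0 Y * stackNegI X = 0) :
    (scareRes A B Q L R A0 B0 X).PosSemidef := by
  have hXs : Xᵀ = X := by rw [← Matrix.conjTranspose_eq_transpose_of_trivial]; exact hX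
  have hYs : Yᵀ = Y := by rw [← Matrix.conjTranspose_eq_transpose_of_trivial]; exact hY
  have hRs : Rᵀ = R := by rw [← Matrix.conjTranspose_eq_transpose_of_trivial]; exact hRsymm
  have hDs : (X - Y)ᵀ = X - Y := by rw [Matrix.transpose_sub, hXs, hYs]
  have hPi22Y : (Pi22 B0 Y).PosSemidef := auxSumPSD _ _ fun i _ => auxCongPSD hYpsd (B0 i)
  have hPi22D : (Pi22 B0 (X - Y)).PosSemidef := auxSumPSD _ _ fun i _ => auxCongPSD hYX (B0 i)
  have hRyPD : (Rc R B0 Y).PosDef := by unfold Rc; exact hRpd.add_posSemidef hPi22Y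
  have hRxeq : Rc R B0 X = Rc R B0 Y + Pi22 B0 (X - Y) := by
    simp only [Rc, Pi22, Matrix.mul_sub, Matrix.sub_mul, Finset.sum_sub_distrib]
    abel
  have hRxPD : (Rc R B0 X).PosDef := by rw [hRxeq]; exact hRyPD.add_posSemidef hPi22D
  have hRys : (Rc R B0 Y)ᵀ = Rc R B0 Y := by
    simp [Rc, Pi22, Matrix.transpose_add, Matrix.transpose_sum, Matrix.transpose_mul,
      Matrix.mul_assoc, hYs, hRs]
  have hRxs : (Rc R B0 X)ᵀ = Rc R B0 X := by
    simp [Rc, Pi22, Matrix.transpose_add, Matrix.transpose_sum, Matrix.transpose_mul,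
      Matrix.mul_assoc, hXs, hRs]
  have hGys : ((Rc R B0 Y)⁻¹)ᵀ = (Rc R B0 Y)⁻¹ := by
    rw [Matrix.transpose_nonsing_inv, hRys]
  have hGxs : ((Rc R B0 X)⁻¹)ᵀ = (Rc R B0 X)⁻¹ := by
    rw [Matrix.transpose_nonsing_inv, hRxs]
  have hdy : IsUnit (Rc R B0 Y).det := (Matrix.isUnit_iff_isUnit_det _).1 hRyPD.isUnit
  have hdx : IsUnit (Rc R B0 X).det := (Matrix.isUnit_iff_isUnit_det _).1 hRxPD.isUnit
  have cy1 : ∀ (Z : Matrix (Fin m) (Fin n) ℝ), Rc R B0 Y * ((Rc R B0 Y)⁻¹ * Z) = Z :=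
    fun Z => by rw [← Matrix.mul_assoc, Matrix.mul_nonsing_inv _ hdy, Matrix.one_mul]
  have cy2 : ∀ (Z : Matrix (Fin m) (Fin n) ℝ), (Rc R B0 Y)⁻¹ * (Rc R B0 Y * Z) = Z :=
    fun Z => by rw [← Matrix.mul_assoc, Matrix.nonsing_inv_mul _ hdy, Matrix.one_mul]
  have cx1 : ∀ (Z : Matrix (Fin m) (Fin n) ℝ), Rc R B0 X * ((Rc R B0 X)⁻¹ * Z) = Z :=
    fun Z => by rw [← Matrix.mul_assoc, Matrix.mul_nonsing_inv _ hdx, Matrix.one_mul]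
  have cx2 : ∀ (Z : Matrix (Fin m) (Fin n) ℝ), (Rc R B0 X)⁻¹ * (Rc R B0 X * Z) = Z :=
    fun Z => by rw [← Matrix.mul_assoc, Matrix.nonsing_inv_mul _ hdx, Matrix.one_mul]
  set uY : Matrix (Fin n) (Fin m) ℝ := X * B + Lc L A0 B0 Y with huY
  set uX : Matrix (Fin n) (Fin m) ℝ := X * B + Lc L A0 B0 X with huX
  set F : Matrix (Fin m) (Fin n) ℝ := -((Rc R B0 X)⁻¹ * uXᵀ) with hF
  set C : Matrix (Fin m) (Fin n) ℝ := F + (Rc R B0 Y)⁻¹ * uYᵀ with hC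
  have hE : Aᵀ * X + X * A + (Q + Pi11 A0 Y) = uY * (Rc R B0 Y)⁻¹ * uYᵀ := by
    have hE0 : Aᵀ * X + X * A + (Q + Pi11 A0 Y) - uY * (Rc R B0 Y)⁻¹ * uYᵀ = 0 := by
      rw [← hfroz, huY]
      simp only [stackNegI, Omega]
      rw [transpose_fromRows, fromCols_mul_fromBlocks, fromCols_mul_fromRows]
      simp only [Gc, Ac, Hc, Qc, Matrix.transpose_neg, Matrix.transpose_one,
        Matrix.transpose_mul, Matrix.transpose_sub, Matrix.transpose_add,
        Matrix.transpose_transpose, hXs, hGys,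
        Matrix.mul_add, Matrix.add_mul, Matrix.sub_mul, Matrix.mul_sub,
        Matrix.neg_mul, Matrix.mul_neg, neg_neg, Matrix.one_mul, Matrix.mul_one,
        Matrix.mul_assoc]
      abel
    have := sub_eq_zero.mp hE0
    exact this
  have hsum : ∑ i, (A0 i + B0 i * F)ᵀ * (X - Y) * (A0 i + B0 i * F)
      = (Pi11 A0 X - Pi11 A0 Y) + (uX - uY) * F + Fᵀ * (uX - uY)ᵀ
        + Fᵀ * ((Rc R B0 X - Rc R B0 Y) * F) := by
    have h12 : uX - uY = ∑ i, (A0 i)ᵀ * (X - Y) * B0 i := by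
      rw [huX, huY]
      simp only [Lc, Pi12, Matrix.mul_sub, Matrix.sub_mul, Finset.sum_sub_distrib]
      abel
    have h22 : Rc R B0 X - Rc R B0 Y = ∑ i, (B0 i)ᵀ * (X - Y) * B0 i := by
      simp only [Rc, Pi22, Matrix.mul_sub, Matrix.sub_mul, Finset.sum_sub_distrib]
      abel
    have h11 : Pi11 A0 X - Pi11 A0 Y = ∑ i, (A0 i)ᵀ * (X - Y) * A0 i := by
      simp only [Pi11, Matrix.mul_sub, Matrix.sub_mul, Finset.sum_sub_distrib]
    calc ∑ i, (A0 i + B0 i * F)ᵀ * (X - Y) * (A0 i + B0 i * F)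
        = ∑ i, ((A0 i)ᵀ * ((X - Y) * A0 i) + (A0 i)ᵀ * ((X - Y) * (B0 i * F))
            + Fᵀ * ((B0 i)ᵀ * ((X - Y) * A0 i))
            + Fᵀ * ((B0 i)ᵀ * ((X - Y) * (B0 i * F)))) := by
          refine Finset.sum_congr rfl fun i _ => ?_
          simp only [Matrix.transpose_add, Matrix.transpose_mul, Matrix.add_mul,
            Matrix.mul_add, Matrix.mul_assoc]
          abel
      _ = _ := by
          rw [h11, h12, h22, Matrix.transpose_sum]
          simp only [Matrix.transpose_mul, Matrix.transpose_transpose, hDs,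
            Matrix.sum_mul, Matrix.mul_sum, Matrix.mul_assoc, Finset.sum_add_distrib]
          try abel
  have step1 : Cᵀ * Rc R B0 Y * C
      + ((Pi11 A0 X - Pi11 A0 Y) + (uX - uY) * F + Fᵀ * (uX - uY)ᵀ
        + Fᵀ * ((Rc R B0 X - Rc R B0 Y) * F))
      = uY * (Rc R B0 Y)⁻¹ * uYᵀ + (Pi11 A0 X - Pi11 A0 Y)
        - uX * (Rc R B0 X)⁻¹ * uXᵀ := by
    rw [hC, hF]
    simp only [Matrix.transpose_add, Matrix.transpose_neg, Matrix.transpose_mul,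
      Matrix.transpose_transpose, Matrix.transpose_sub, hGys, hGxs,
      Matrix.mul_add, Matrix.add_mul, Matrix.sub_mul, Matrix.mul_sub,
      Matrix.neg_mul, Matrix.mul_neg, neg_neg, Matrix.mul_assoc, cy1, cy2, cx1, cx2]
    abel
  have step2 : scareRes A B Q L R A0 B0 X
      = uY * (Rc R B0 Y)⁻¹ * uYᵀ + (Pi11 A0 X - Pi11 A0 Y)
        - uX * (Rc R B0 X)⁻¹ * uXᵀ := by
    rw [← hE]
    simp only [scareRes, Qc]
    rw [← huX]
    abel
  have main : scareRes A B Q L R A0 B0 X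
      = Cᵀ * Rc R B0 Y * C + ∑ i, (A0 i + B0 i * F)ᵀ * (X - Y) * (A0 i + B0 i * F) := by
    rw [step2, hsum, step1]
  rw [main]
  exact (auxCongPSD hRyPD.posSemidef C).add
    (auxSumPSD _ _ fun i _ => auxCongPSD hYX (A0 i + B0 i * F))
end
end
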